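/- arXiv:1308.0933 — 6 statements merged into one kernel-verified Lean document; each statement's English description precedes it below -/
import Mathlib

section
/- Let J ≥ 1 and let (π_0, …, π_J) be a probability vector with π_i > 0 for all i and π_J < 1, and let P_i = Σ_{j=0}^i π_j. Then D(π) := 1 − 2 (π_J/(1−π_J)) Σ_{i=0}^J P_i (1 − π_J P_i/π_i) satisfies D(π) ≥ (1/2 − π_J)/(1 − π_J). -/
lemma term_le_aux (q p P : ℝ) (hq : 0 < q) (hp : 0 < p) :
    P * (1 - q * P / p) ≤ p / (4 * q) := by
  have h : P * (1 - q * P / p) = (P * p - q * P ^ 2) / p := by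
    field_simp
  rw [h, div_le_div_iff₀ hp (by positivity)]
  nlinarith [sq_nonneg (p - 2 * q * P)]

theorem D_lower_bound (J : ℕ) (hJ : 1 ≤ J) (p : ℕ → ℝ)
    (hpos : ∀ i ≤ J, 0 < p i)
    (hsum : ∑ i ∈ Finset.range (J + 1), p i = 1)
    (hJlt : p J < 1) :
    1 - 2 * (p J / (1 - p J)) *
        ∑ i ∈ Finset.range (J + 1),
          (∑ j ∈ Finset.range (i + 1), p j) *
            (1 - p J * (∑ j ∈ Finset.range (i + 1), p j) / p i)
      ≥ (1 / 2 - p J) / (1 - p J) := by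
  have hq : 0 < p J := hpos J le_rfl
  have h1q : 0 < 1 - p J := by linarith
  set q := p J with hqdef
  set S := ∑ i ∈ Finset.range (J + 1),
      (∑ j ∈ Finset.range (i + 1), p j) *
        (1 - q * (∑ j ∈ Finset.range (i + 1), p j) / p i) with hS
  have hSle : S ≤ 1 / (4 * q) := by
    have := Finset.sum_le_sum (fun i hi => term_le_aux q (p i)
      (∑ j ∈ Finset.range (i + 1), p j) hq
      (hpos i (Nat.lt_succ_iff.mp (Finset.mem_range.mp hi))))
    calc S ≤ ∑ i ∈ Finset.range (J + 1), p i / (4 * q) := this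
      _ = 1 / (4 * q) := by rw [← Finset.sum_div, hsum]
  rw [ge_iff_le, div_le_iff₀ h1q]
  have hid : q / (1 - q) * (1 - q) = q := div_mul_cancel₀ _ (ne_of_gt h1q)
  have h4 : 4 * q * S ≤ 1 := by
    rw [le_div_iff₀ (by positivity)] at hSle
    linarith [hSle]
  nlinarith [hSle, hq, h1q, h4, hid]
end

section
/- Let η > 0 and β ≠ 0 be fixed reals, and let (K_s) be positive integers with K_s/√s → η. For each sufficiently large s let π^{(s)} be the stationary distribution of the M/M/s/K_s queue with ρ = ρ_s := 1 − β/√s and J = s + K_s. Then the stationary probability of delay Σ_{i=s}^{J} π^{(s)}_i converges as s → ∞ to (1 − e^{−βη}) h(η,β), where h(η,β) = 1/(1 − e^{−βη} + β Φ(β)/φ(β)). -/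
open Filter Real
open MeasureTheory Finset

/-- Unnormalized stationary weights of the M/M/s/K queue with traffic intensity ρ. -/
noncomputable def statw (s : ℕ) (ρ : ℝ) (i : ℕ) : ℝ :=
  if i ≤ s then (s * ρ) ^ i / (Nat.factorial i) else ρ ^ (i - s) * (s * ρ) ^ s / (Nat.factorial s)

/-- Stationary distribution of the M/M/s/K queue on `{0,…,s+K}`. -/
noncomputable def statPi (s K : ℕ) (ρ : ℝ) (i : ℕ) : ℝ :=
  statw s ρ i / ∑ j ∈ Finset.range (s + K + 1), statw s ρ j

/-- Standard normal cumulative distribution function. -/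
noncomputable def normalCDF (x : ℝ) : ℝ :=
  (Real.sqrt (2 * Real.pi))⁻¹ * ∫ v in Set.Iic x, Real.exp (-v ^ 2 / 2)

/-- Standard normal density. -/
noncomputable def normalPDF (x : ℝ) : ℝ :=
  Real.exp (-x ^ 2 / 2) / Real.sqrt (2 * Real.pi)

noncomputable def hfun (η β : ℝ) : ℝ :=
  1 / (1 - Real.exp (-(β * η)) + β * normalCDF β / normalPDF β)


noncomputable def Tm (s : ℕ) (ρ : ℝ) (m : ℕ) : ℝ := (s.descFactorial m : ℝ) / (s*ρ)^m


lemma statw_add (s k : ℕ) (ρ : ℝ) : statw s ρ (s + k) = ρ ^ k * ((s*ρ)^s / (Nat.factorial s)) := by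
  cases k with
  | zero => simp [statw]
  | succ k => simp [statw, Nat.add_sub_cancel_left, mul_div_assoc]

lemma statw_sub (s m : ℕ) (ρ : ℝ) (hm : m ≤ s) (hρ : (s:ℝ) * ρ ≠ 0) :
    statw s ρ (s - m) = Tm s ρ m * ((s*ρ)^s / (Nat.factorial s)) := by
  have h1 : (Nat.factorial (s - m) : ℝ) * (s.descFactorial m : ℝ) = Nat.factorial s := by
    exact_mod_cast congrArg (Nat.cast (R := ℝ)) (Nat.factorial_mul_descFactorial hm)
  have h2 : ((s:ℝ)*ρ)^s = (s*ρ)^(s-m) * (s*ρ)^m := by rw [← pow_add]; congr 1; omega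
  have hf1 : (Nat.factorial (s-m) : ℝ) ≠ 0 := by positivity
  have hf2 : (Nat.factorial s : ℝ) ≠ 0 := by positivity
  rw [statw, if_pos (by omega), Tm, h2]
  field_simp
  rw [← h1]

lemma sum_num (s K : ℕ) (ρ : ℝ) :
    (∑ i ∈ Finset.Icc s (s + K), statw s ρ i)
      = ((s*ρ)^s / (Nat.factorial s)) * ∑ k ∈ Finset.range (K+1), ρ ^ k := by
  rw [← Finset.Ico_add_one_right_eq_Icc, Finset.sum_Ico_eq_sum_range]
  have : s + K + 1 - s = K + 1 := by omega
  rw [this, Finset.mul_sum]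
  exact Finset.sum_congr rfl fun k _ => by rw [statw_add]; ring

lemma sum_den (s : ℕ) (ρ : ℝ) (hρ : (s:ℝ) * ρ ≠ 0) :
    (∑ j ∈ Finset.range s, statw s ρ j)
      = ((s*ρ)^s / (Nat.factorial s)) * ∑ m ∈ Finset.Icc 1 s, Tm s ρ m := by
  rw [Finset.mul_sum]
  apply Finset.sum_nbij' (fun j => s - j) (fun m => s - m)
  · intro j hj; simp at hj ⊢; omega
  · intro m hm; simp at hm ⊢; omega
  · intro j hj; simp at hj ⊢; omega
  · intro m hm; simp at hm ⊢; omega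
  · intro j hj; simp at hj
    have h := statw_sub s (s - j) ρ (by omega) hρ
    rw [show s - (s - j) = j by omega] at h
    rw [h]; ring

lemma sqrt_nat_tendsto : Tendsto (fun s : ℕ => Real.sqrt s) atTop atTop := by
  apply tendsto_atTop_atTop.2
  intro b
  refine ⟨⌈(max b 0)^2⌉₊, fun n hn => ?_⟩
  have h : ((max b 0)^2 : ℝ) ≤ n := le_trans (Nat.le_ceil _) (by exact_mod_cast hn)
  calc b ≤ max b 0 := le_max_left _ _
  _ = Real.sqrt ((max b 0)^2) := (Real.sqrt_sq (le_max_right _ _)).symm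
  _ ≤ _ := Real.sqrt_le_sqrt h

lemma sqrt_log_tendsto (β : ℝ) :
    Tendsto (fun s : ℕ => Real.sqrt s * Real.log (1 - β / Real.sqrt s)) atTop (nhds (-β)) := by
  have h := (tendsto_mul_log_one_add_div_atTop (-β)).comp sqrt_nat_tendsto
  refine h.congr fun s => ?_
  simp [Function.comp, sub_eq_add_neg, neg_div]

lemma inv_sqrt_tendsto : Tendsto (fun s : ℕ => (Real.sqrt s)⁻¹) atTop (nhds 0) :=
  tendsto_inv_atTop_zero.comp sqrt_nat_tendsto

lemma rho_pos_ev (β : ℝ) : ∀ᶠ s : ℕ in atTop, 0 < 1 - β / Real.sqrt s := by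
  rcases le_or_gt β 0 with hb | hb
  · filter_upwards [sqrt_nat_tendsto.eventually_gt_atTop 0] with s hs
    have : β / Real.sqrt s ≤ 0 := div_nonpos_of_nonpos_of_nonneg hb hs.le
    linarith
  · filter_upwards [sqrt_nat_tendsto.eventually_gt_atTop (2*β)] with s hs
    have h2 : β / Real.sqrt s < 1 := by
      rw [div_lt_one (by linarith)]; linarith
    linarith

lemma rho_pow_tendsto (η β : ℝ) (K : ℕ → ℕ)
    (hlim : Tendsto (fun s : ℕ => (K s : ℝ) / Real.sqrt s) atTop (nhds η)) :
    Tendsto (fun s : ℕ => (1 - β / Real.sqrt s) ^ (K s + 1)) atTop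
      (nhds (Real.exp (-(β * η)))) := by
  have hKs : Tendsto (fun s : ℕ => ((K s : ℝ) + 1) / Real.sqrt s) atTop (nhds η) := by
    have h := hlim.add inv_sqrt_tendsto
    rw [add_zero] at h
    refine h.congr fun s => ?_
    rw [add_div, div_eq_mul_inv, one_div]
  have hmain : Tendsto (fun s : ℕ =>
      (((K s : ℝ) + 1) / Real.sqrt s) * (Real.sqrt s * Real.log (1 - β / Real.sqrt s)))
      atTop (nhds (η * -β)) := hKs.mul (sqrt_log_tendsto β)
  have hexp := (Real.continuous_exp.tendsto _).comp hmain
  rw [show Real.exp (-(β * η)) = Real.exp (η * -β) by ring_nf]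
  refine hexp.congr' ?_
  filter_upwards [rho_pos_ev β, sqrt_nat_tendsto.eventually_gt_atTop 0] with s hs hs0
  have h1 : (((K s : ℝ) + 1) / Real.sqrt s) * (Real.sqrt s * Real.log (1 - β / Real.sqrt s))
      = ((K s + 1 : ℕ) : ℝ) * Real.log (1 - β / Real.sqrt s) := by
    push_cast; field_simp
  simp only [Function.comp]
  rw [h1, Real.exp_nat_mul, Real.exp_log hs]

lemma log_one_sub_bound {u : ℝ} (h : |u| ≤ 1/2) : |Real.log (1-u) + u| ≤ 2*u^2 := by
  have h1 : |u| < 1 := lt_of_le_of_lt h (by norm_num)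
  have h2 := abs_log_sub_add_sum_range_le h1 1
  simp only [Finset.sum_range_one, pow_one, Nat.cast_zero, zero_add, div_one] at h2
  have h3 : |u|^2 / (1 - |u|) ≤ 2*u^2 := by
    rw [sq_abs]
    rw [div_le_iff₀ (by linarith [abs_nonneg u])]
    nlinarith [sq_nonneg u, abs_nonneg u]
  calc |Real.log (1-u) + u| = |u + Real.log (1-u)| := by rw [add_comm]
  _ ≤ |u|^2/(1-|u|) := by simpa using h2
  _ ≤ 2*u^2 := h3

lemma gauss_sum (m : ℕ) : (∑ l ∈ Finset.range m, (l:ℝ)) = m*((m:ℝ)-1)/2 := by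
  induction m with
  | zero => simp
  | succ m ih => rw [Finset.sum_range_succ, ih]; push_cast; ring

lemma sum_log_le (s m : ℕ) (hm : m ≤ s) (hs : 0 < s) :
    (∑ l ∈ Finset.range m, Real.log (1 - (l:ℝ)/s)) ≤ -((m:ℝ)*((m:ℝ)-1))/(2*s) := by
  have hss : (0:ℝ) < s := by exact_mod_cast hs
  have h : ∀ l ∈ Finset.range m, Real.log (1 - (l:ℝ)/s) ≤ -((l:ℝ)/s) := by
    intro l hl
    have hls : (l:ℝ) < s := by
      have : l < s := lt_of_lt_of_le (Finset.mem_range.1 hl) hm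
      exact_mod_cast this
    have hpos : 0 < 1 - (l:ℝ)/s := by
      rw [sub_pos, div_lt_one hss]; exact hls
    have := log_le_sub_one_of_pos hpos
    linarith
  calc (∑ l ∈ Finset.range m, Real.log (1 - (l:ℝ)/s)) ≤ ∑ l ∈ Finset.range m, -((l:ℝ)/s) :=
        Finset.sum_le_sum h
  _ = -((m:ℝ)*((m:ℝ)-1))/(2*s) := by
      have h2 : ∑ l ∈ Finset.range m, -((l:ℝ)/s) = -((∑ l ∈ Finset.range m, (l:ℝ))/s) := by
        rw [Finset.sum_div, ← Finset.sum_neg_distrib]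
      rw [h2, gauss_sum]; ring

lemma sum_log_est (s m : ℕ) (hm : 2*m ≤ s) (hs : 0 < s) :
    |(∑ l ∈ Finset.range m, Real.log (1 - (l:ℝ)/s)) + (m:ℝ)*((m:ℝ)-1)/(2*s)| ≤ 2*(m:ℝ)^3/s^2 := by
  have hss : (0:ℝ) < s := by exact_mod_cast hs
  have key : (∑ l ∈ Finset.range m, Real.log (1 - (l:ℝ)/s)) + (m:ℝ)*((m:ℝ)-1)/(2*s)
      = ∑ l ∈ Finset.range m, (Real.log (1 - (l:ℝ)/s) + (l:ℝ)/s) := by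
    rw [Finset.sum_add_distrib, ← Finset.sum_div, gauss_sum]
    ring
  rw [key]
  calc |∑ l ∈ Finset.range m, (Real.log (1 - (l:ℝ)/s) + (l:ℝ)/s)|
      ≤ ∑ l ∈ Finset.range m, |Real.log (1 - (l:ℝ)/s) + (l:ℝ)/s| := Finset.abs_sum_le_sum_abs _ _
  _ ≤ ∑ l ∈ Finset.range m, 2*((m:ℝ)/s)^2 := by
      apply Finset.sum_le_sum
      intro l hl
      have hlm : (l:ℝ) < m := by exact_mod_cast Finset.mem_range.1 hl
      have hl0 : (0:ℝ) ≤ l := Nat.cast_nonneg l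
      have hb : |(l:ℝ)/s| ≤ 1/2 := by
        rw [abs_of_nonneg (by positivity)]
        rw [div_le_iff₀ hss]
        have : 2*(m:ℝ) ≤ s := by exact_mod_cast hm
        nlinarith
      have := log_one_sub_bound hb
      refine le_trans this ?_
      have : ((l:ℝ)/s)^2 ≤ ((m:ℝ)/s)^2 := by
        gcongr
      linarith
  _ = 2*(m:ℝ)^3/s^2 := by
      rw [Finset.sum_const, Finset.card_range]
      rw [nsmul_eq_mul]
      ring

lemma Tm_pos (s m : ℕ) (ρ : ℝ) (hm : m ≤ s) (hs : 0 < s) (hρ : 0 < ρ) : 0 < Tm s ρ m := by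
  have h1 : 0 < s.descFactorial m := by
    rcases Nat.eq_zero_or_pos (s.descFactorial m) with h | h
    · exact absurd (Nat.descFactorial_eq_zero_iff_lt.1 h) (not_lt.2 hm)
    · exact h
  have h2 : (0:ℝ) < (s:ℝ)*ρ := by
    have : (0:ℝ) < s := by exact_mod_cast hs
    positivity
  have h1' : (0:ℝ) < s.descFactorial m := by exact_mod_cast h1
  exact div_pos h1' (pow_pos h2 m)

lemma Tm_prod (s m : ℕ) (ρ : ℝ) (hm : m ≤ s) :
    Tm s ρ m = ∏ l ∈ Finset.range m, (((s:ℝ) - l)/((s:ℝ)*ρ)) := by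
  rw [Tm, Finset.prod_div_distrib, Finset.prod_const, Finset.card_range]
  congr 1
  rw [Nat.descFactorial_eq_prod_range]
  push_cast [Nat.cast_prod]
  apply Finset.prod_congr rfl
  intro l hl
  have : l ≤ s := le_trans (Finset.mem_range.1 hl).le hm
  rw [Nat.cast_sub this]

lemma logTm (s m : ℕ) (ρ : ℝ) (hs : 0 < s) (hm : m ≤ s) (hρ : 0 < ρ) :
    Real.log (Tm s ρ m)
      = (∑ l ∈ Finset.range m, Real.log (1 - (l:ℝ)/s)) - m * Real.log ρ := by
  have hss : (0:ℝ) < s := by exact_mod_cast hs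
  rw [Tm_prod s m ρ hm]
  rw [Real.log_prod (by
    intro l hl
    have hls : (l:ℝ) < s := by exact_mod_cast lt_of_lt_of_le (Finset.mem_range.1 hl) hm
    have : (0:ℝ) < ((s:ℝ) - l)/((s:ℝ)*ρ) := div_pos (by linarith) (by positivity)
    exact this.ne')]
  have hterm : ∀ l ∈ Finset.range m, Real.log (((s:ℝ) - l)/((s:ℝ)*ρ))
      = Real.log (1 - (l:ℝ)/s) - Real.log ρ := by
    intro l hl
    have hls : (l:ℝ) < s := by exact_mod_cast lt_of_lt_of_le (Finset.mem_range.1 hl) hm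
    have h1 : ((s:ℝ) - l)/((s:ℝ)*ρ) = (1 - (l:ℝ)/s) / ρ := by field_simp
    have h2 : (0:ℝ) < 1 - (l:ℝ)/s := by rw [sub_pos, div_lt_one hss]; exact hls
    rw [h1, Real.log_div h2.ne' hρ.ne']
  rw [Finset.sum_congr rfl hterm, Finset.sum_sub_distrib, Finset.sum_const, Finset.card_range,
    nsmul_eq_mul]

lemma Tm_ceil_tendsto (β x : ℝ) (hx : 0 < x) :
    Tendsto (fun s : ℕ => Tm s (1 - β/Real.sqrt s) (⌈x * Real.sqrt s⌉₊)) atTop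
      (nhds (Real.exp (β*x - x^2/2))) := by
  set q : ℕ → ℝ := fun s => Real.sqrt s with hq
  set m : ℕ → ℕ := fun s => ⌈x * q s⌉₊ with hmdef
  have hqnn : ∀ s, 0 ≤ q s := fun s => Real.sqrt_nonneg _
  have hle : ∀ s, x * q s ≤ m s := fun s => Nat.le_ceil _
  have hlt : ∀ s, (m s : ℝ) < x * q s + 1 :=
    fun s => Nat.ceil_lt_add_one (mul_nonneg hx.le (hqnn s))
  have hq2 : ∀ s : ℕ, q s ^ 2 = (s:ℝ) := fun s => Real.sq_sqrt (Nat.cast_nonneg s)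
  have hqT : Tendsto q atTop atTop := sqrt_nat_tendsto
  have hqpos : ∀ᶠ s : ℕ in atTop, 0 < q s := hqT.eventually_gt_atTop 0
  -- m s ≤ s eventually
  have hms : ∀ᶠ s : ℕ in atTop, m s ≤ s := by
    filter_upwards [hqT.eventually_ge_atTop (x + 1), hqT.eventually_ge_atTop 1] with s h1 h2
    have : (m s : ℝ) ≤ (s : ℝ) := by
      have := hlt s
      have hq2s := hq2 s
      nlinarith [hqnn s]
    exact_mod_cast this
  have h2ms : ∀ᶠ s : ℕ in atTop, 2 * m s ≤ s := by
    filter_upwards [hqT.eventually_ge_atTop (2*x + 2), hqT.eventually_ge_atTop 1] with s h1 h2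
    have : (2 * m s : ℝ) ≤ (s : ℝ) := by
      have := hlt s
      have hq2s := hq2 s
      nlinarith [hqnn s]
    exact_mod_cast this
  have hspos : ∀ᶠ s : ℕ in atTop, 0 < s := eventually_gt_atTop 0
  -- m/q → x
  have hmq : Tendsto (fun s => (m s : ℝ) / q s) atTop (nhds x) := by
    apply tendsto_of_tendsto_of_tendsto_of_le_of_le' tendsto_const_nhds
      (g := fun _ => x) (h := fun s => x + (q s)⁻¹)
    · simpa using tendsto_const_nhds.add inv_sqrt_tendsto
    · filter_upwards [hqpos] with s hs
      rw [le_div_iff₀ hs]; exact hle s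
    · filter_upwards [hqpos] with s hs
      rw [div_le_iff₀ hs, add_mul]
      have h3 : (q s)⁻¹ * q s = 1 := inv_mul_cancel₀ hs.ne'
      calc (m s : ℝ) ≤ x * q s + 1 := (hlt s).le
      _ = x * q s + (q s)⁻¹ * q s := by rw [h3]
  -- -m log ρ → βx
  have hA : Tendsto (fun s => (m s : ℝ) * Real.log (1 - β / q s)) atTop (nhds (-(x*β))) := by
    have := hmq.mul (sqrt_log_tendsto β)
    rw [show x * -β = -(x*β) by ring] at this
    refine this.congr' ?_
    filter_upwards [hqpos] with s hs
    show (m s : ℝ) / q s * (q s * Real.log (1 - β / q s)) = (m s:ℝ) * Real.log (1 - β / q s)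
    rw [← mul_assoc, div_mul_cancel₀ _ hs.ne']
  -- m(m-1)/(2s) → x²/2
  have hB : Tendsto (fun s => (m s : ℝ) * ((m s : ℝ) - 1) / (2 * s)) atTop (nhds (x^2/2)) := by
    have h1 : Tendsto (fun s => ((m s : ℝ)/q s) * ((m s : ℝ)/q s - (q s)⁻¹) / 2) atTop
        (nhds (x * (x - 0) / 2)) := ((hmq.mul (hmq.sub inv_sqrt_tendsto))).div_const 2
    rw [show x * (x - 0)/2 = x^2/2 by ring] at h1
    refine h1.congr' ?_
    filter_upwards [hqpos] with s hs
    rw [← hq2 s]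
    field_simp
  -- sum of logs → -x²/2
  have hC : Tendsto (fun s => ∑ l ∈ Finset.range (m s), Real.log (1 - (l:ℝ)/s)) atTop
      (nhds (-(x^2/2))) := by
    have herr : Tendsto (fun s => (∑ l ∈ Finset.range (m s), Real.log (1 - (l:ℝ)/s))
        + (m s : ℝ) * ((m s : ℝ) - 1) / (2 * s)) atTop (nhds 0) := by
      apply squeeze_zero_norm' (a := fun s => 2 * ((m s : ℝ)/q s)^3 * (q s)⁻¹)
      · filter_upwards [h2ms, hspos, hqpos] with s h2m hsp hqp
        have := sum_log_est s (m s) h2m hsp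
        refine le_trans this (le_of_eq ?_)
        rw [← hq2 s]
        field_simp
      · have := ((hmq.pow 3).const_mul 2).mul inv_sqrt_tendsto
        simpa using this
    have := herr.sub hB
    rw [zero_sub] at this
    refine this.congr fun s => by ring
  -- combine
  have hlog : Tendsto (fun s => Real.log (Tm s (1 - β/q s) (m s))) atTop
      (nhds (-(x^2/2) + x*β)) := by
    have h1 := hC.sub hA
    rw [sub_neg_eq_add] at h1
    refine h1.congr' ?_
    filter_upwards [hms, hspos, rho_pos_ev β] with s h1 h2 h3
    rw [logTm s (m s) _ h2 h1 h3]
  have hexp := (Real.continuous_exp.tendsto _).comp hlog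
  rw [show Real.exp (β*x - x^2/2) = Real.exp (-(x^2/2) + x*β) by ring_nf] at *
  refine hexp.congr' ?_
  filter_upwards [hms, hspos, rho_pos_ev β] with s h1 h2 h3
  simp only [Function.comp]
  rw [Real.exp_log (Tm_pos s (m s) _ h1 h2 h3)]

noncomputable def Fstep (β : ℝ) (s : ℕ) (x : ℝ) : ℝ :=
  ∑ m ∈ Finset.Icc 1 s,
    Set.indicator (Set.Ioc (((m:ℝ)-1)/Real.sqrt s) ((m:ℝ)/Real.sqrt s))
      (fun _ => Tm s (1 - β/Real.sqrt s) m) x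

lemma Fstep_meas (β : ℝ) (s : ℕ) : Measurable (Fstep β s) := by
  apply Finset.measurable_sum
  intro m _
  exact (measurable_const).indicator measurableSet_Ioc

lemma Fstep_integral (β : ℝ) (s : ℕ) (hs : 0 < s) :
    ∫ x, Fstep β s x
      = (Real.sqrt s)⁻¹ * ∑ m ∈ Finset.Icc 1 s, Tm s (1 - β/Real.sqrt s) m := by
  have hq : (0:ℝ) < Real.sqrt s := Real.sqrt_pos.2 (by exact_mod_cast hs)
  simp only [Fstep]
  rw [MeasureTheory.integral_finset_sum]
  · rw [Finset.mul_sum]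
    apply Finset.sum_congr rfl
    intro m _
    rw [MeasureTheory.integral_indicator_const _ measurableSet_Ioc, MeasureTheory.measureReal_def, Real.volume_Ioc]
    have h1 : (m:ℝ)/Real.sqrt s - ((m:ℝ)-1)/Real.sqrt s = (Real.sqrt s)⁻¹ := by
      field_simp
      ring
    rw [h1, ENNReal.toReal_ofReal (by positivity)]
    simp [smul_eq_mul]
  · intro m _
    rw [MeasureTheory.integrable_indicator_iff measurableSet_Ioc]
    exact integrableOn_const (by rw [Real.volume_Ioc]; exact ENNReal.ofReal_ne_top)

lemma Fstep_zero (β : ℝ) (s : ℕ) (x : ℝ) (hs : 0 < s)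
    (hx : x ∉ Set.Ioc (0:ℝ) (Real.sqrt s)) : Fstep β s x = 0 := by
  have hq : (0:ℝ) < Real.sqrt s := Real.sqrt_pos.2 (by exact_mod_cast hs)
  apply Finset.sum_eq_zero
  intro m hm
  rw [Finset.mem_Icc] at hm
  apply Set.indicator_of_notMem
  intro hmem
  rcases hmem with ⟨h1, h2⟩
  apply hx
  constructor
  · have : (0:ℝ) ≤ ((m:ℝ)-1)/Real.sqrt s := by
      apply div_nonneg _ hq.le
      have : (1:ℝ) ≤ m := by exact_mod_cast hm.1
      linarith
    linarith
  · have hms : (m:ℝ) ≤ s := by exact_mod_cast hm.2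
    have : (m:ℝ)/Real.sqrt s ≤ Real.sqrt s := by
      rw [div_le_iff₀ hq]
      calc (m:ℝ) ≤ s := hms
      _ = Real.sqrt s * Real.sqrt s := (Real.mul_self_sqrt (Nat.cast_nonneg s)).symm
    linarith

lemma Fstep_val (β : ℝ) (s : ℕ) (x : ℝ) (hs : 0 < s) (hx : 0 < x)
    (hx2 : x ≤ Real.sqrt s) :
    Fstep β s x = Tm s (1 - β/Real.sqrt s) (⌈x * Real.sqrt s⌉₊) := by
  have hq : (0:ℝ) < Real.sqrt s := Real.sqrt_pos.2 (by exact_mod_cast hs)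
  set m₀ := ⌈x * Real.sqrt s⌉₊ with hm₀
  have hxq : 0 < x * Real.sqrt s := mul_pos hx hq
  have h1 : 1 ≤ m₀ := Nat.one_le_iff_ne_zero.2 (Nat.ceil_pos.2 hxq).ne'
  have h2 : m₀ ≤ s := by
    rw [hm₀, Nat.ceil_le]
    calc x * Real.sqrt s ≤ Real.sqrt s * Real.sqrt s := by nlinarith
    _ = s := Real.mul_self_sqrt (Nat.cast_nonneg s)
  have hmem : m₀ ∈ Finset.Icc 1 s := Finset.mem_Icc.2 ⟨h1, h2⟩
  rw [Fstep, Finset.sum_eq_single_of_mem m₀ hmem]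
  · apply Set.indicator_of_mem
    constructor
    · rw [div_lt_iff₀ hq]
      have := Nat.ceil_lt_add_one hxq.le
      have hcast : ((m₀ - 1 : ℕ) : ℝ) = (m₀ : ℝ) - 1 := by
        rw [Nat.cast_sub h1]; norm_num
      nlinarith [Nat.ceil_lt_add_one hxq.le]
    · rw [le_div_iff₀ hq]
      exact Nat.le_ceil _
  · intro m hm hne
    apply Set.indicator_of_notMem
    intro hmem2
    apply hne
    rw [Finset.mem_Icc] at hm
    have hm1 : m ≠ 0 := by omega
    have : ⌈x * Real.sqrt s⌉₊ = m := by
      rw [Nat.ceil_eq_iff hm1]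
      constructor
      · have := hmem2.1
        rw [div_lt_iff₀ hq] at this
        rw [Nat.cast_sub (by omega)]
        push_cast
        linarith
      · have := hmem2.2
        rw [le_div_iff₀ hq] at this
        linarith
    omega

lemma integrable_gauss_shift (b c : ℝ) :
    MeasureTheory.Integrable (fun x : ℝ => Real.exp (-x^2/2 + b*x + c)) := by
  have h := (integrable_exp_neg_mul_sq (show (0:ℝ) < 1/2 by norm_num)).comp_sub_right b
  have h2 := h.const_mul (Real.exp (c + b^2/2))
  refine h2.congr (MeasureTheory.ae_of_all _ fun x => ?_)
  show Real.exp (c + b^2/2) * Real.exp (-(1/2) * (x - b)^2) = _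
  rw [← Real.exp_add]
  congr 1
  ring

noncomputable def Gbound (β : ℝ) (x : ℝ) : ℝ :=
  Real.exp (-x^2/2 + (1/2 + |β| + 2*β^2) * x + (1/2 + |β| + 2*β^2))

lemma Gbound_integrable (β : ℝ) : MeasureTheory.Integrable (Gbound β) :=
  integrable_gauss_shift _ _

lemma neg_log_rho_bound (β : ℝ) {s : ℕ} (h1 : 2*|β| ≤ Real.sqrt s) (h2 : 1 ≤ Real.sqrt s) :
    -Real.log (1 - β/Real.sqrt s) ≤ |β| / Real.sqrt s + 2*β^2/s := by
  have hq : (0:ℝ) < Real.sqrt s := lt_of_lt_of_le one_pos h2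
  have hu : |β/Real.sqrt s| ≤ 1/2 := by
    rw [abs_div, abs_of_pos hq, div_le_iff₀ hq]
    linarith
  have hb := log_one_sub_bound hu
  have habs : |β/Real.sqrt s| = |β| / Real.sqrt s := by rw [abs_div, abs_of_pos hq]
  have hsq : (β/Real.sqrt s)^2 = β^2/s := by
    rw [div_pow, Real.sq_sqrt (Nat.cast_nonneg s)]
  rw [abs_le] at hb
  have t1 : -Real.log (1 - β/Real.sqrt s) ≤ β/Real.sqrt s + 2*(β/Real.sqrt s)^2 := by
    linarith [hb.1]
  have t2 : β/Real.sqrt s ≤ |β| / Real.sqrt s := by rw [← habs]; exact le_abs_self _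
  rw [hsq, ← mul_div_assoc] at t1
  linarith

lemma Fstep_bound (β : ℝ) : ∀ᶠ s : ℕ in atTop, ∀ x : ℝ, ‖Fstep β s x‖ ≤ Gbound β x := by
  filter_upwards [sqrt_nat_tendsto.eventually_ge_atTop (2*|β|),
    sqrt_nat_tendsto.eventually_ge_atTop 1, eventually_gt_atTop 0, rho_pos_ev β]
    with s hb1 hb2 hspos hρ
  intro x
  have hq : (0:ℝ) < Real.sqrt s := lt_of_lt_of_le one_pos hb2
  by_cases hx : x ∈ Set.Ioc (0:ℝ) (Real.sqrt s)
  · obtain ⟨hx1, hx2⟩ := hx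
    rw [Fstep_val β s x hspos hx1 hx2]
    set m₀ := ⌈x * Real.sqrt s⌉₊ with hm₀
    have hxq : 0 < x * Real.sqrt s := mul_pos hx1 hq
    have h1 : 1 ≤ m₀ := Nat.one_le_iff_ne_zero.2 (Nat.ceil_pos.2 hxq).ne'
    have h2 : m₀ ≤ s := by
      rw [hm₀, Nat.ceil_le]
      calc x * Real.sqrt s ≤ Real.sqrt s * Real.sqrt s := by nlinarith
      _ = s := Real.mul_self_sqrt (Nat.cast_nonneg s)
    have hTpos := Tm_pos s m₀ _ h2 hspos hρ
    rw [Real.norm_eq_abs, abs_of_pos hTpos]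
    have hlog := logTm s m₀ _ hspos h2 hρ
    have hss : (0:ℝ) < s := by exact_mod_cast hspos
    have hs1 : (1:ℝ) ≤ s := by exact_mod_cast hspos
    have hq2 : Real.sqrt s * Real.sqrt s = (s:ℝ) := Real.mul_self_sqrt (Nat.cast_nonneg s)
    have hmlb : x * Real.sqrt s ≤ (m₀:ℝ) := Nat.le_ceil _
    have hmub : (m₀:ℝ) < x * Real.sqrt s + 1 := Nat.ceil_lt_add_one hxq.le
    have hsum := sum_log_le s m₀ h2 hspos
    have hrlog := neg_log_rho_bound β hb1 hb2
    have hstep : Real.log (Tm s (1 - β/Real.sqrt s) m₀)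
        ≤ -x^2/2 + (1/2 + |β| + 2*β^2) * x + (1/2 + |β| + 2*β^2) := by
      rw [hlog]
      have hB : -((m₀:ℝ) * Real.log (1 - β/Real.sqrt s))
          ≤ (m₀:ℝ) * (|β| / Real.sqrt s + 2*β^2/s) := by
        rw [neg_mul_eq_mul_neg]
        apply mul_le_mul_of_nonneg_left hrlog (by positivity)
      have hm0pos : (0:ℝ) < m₀ := by exact_mod_cast h1
      have key1 : -((m₀:ℝ)*((m₀:ℝ)-1))/(2*s) ≤ -x^2/2 + x/(2*Real.sqrt s) + 1/(2*s) := by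
        rw [div_le_iff₀ (by positivity : (0:ℝ) < 2*s)]
        have e1 : (m₀:ℝ)*((m₀:ℝ)-1) ≥ x^2*s - x*Real.sqrt s - 1 := by nlinarith
        have e2 : (-x^2/2 + x/(2*Real.sqrt s) + 1/(2*s)) * (2*s)
            = -x^2*s + x*Real.sqrt s + 1 := by
          field_simp
          linear_combination (-x) * hq2
        rw [e2]; linarith
      have key2 : (m₀:ℝ) * (|β| / Real.sqrt s + 2*β^2/s)
          ≤ (|β| + 2*β^2) * x + (|β| + 2*β^2) := by
        have e4 : (m₀:ℝ) * (|β| / Real.sqrt s + 2*β^2/s)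
            ≤ (x*Real.sqrt s + 1) * (|β| / Real.sqrt s + 2*β^2/s) := by
          apply mul_le_mul_of_nonneg_right hmub.le (by positivity)
        refine le_trans e4 ?_
        have e5 : (x*Real.sqrt s + 1) * (|β| / Real.sqrt s + 2*β^2/s)
            = |β| * x + 2*β^2*x/Real.sqrt s + |β| / Real.sqrt s + 2*β^2/s := by
          field_simp
          linear_combination (2*β^2*x) * hq2
        rw [e5]
        have i1 : 2*β^2*x/Real.sqrt s ≤ 2*β^2*x := by
          apply div_le_self (by positivity) hb2
        have i2 : |β| / Real.sqrt s ≤ |β| := div_le_self (abs_nonneg β) hb2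
        have i3 : 2*β^2/s ≤ 2*β^2 := div_le_self (by positivity) hs1
        nlinarith
      have key3 : x/(2*Real.sqrt s) ≤ x/2 := by
        rw [← div_div]
        exact div_le_self (by positivity) hb2
      have key4 : 1/(2*(s:ℝ)) ≤ 1/2 := by
        rw [← div_div]
        exact div_le_self (by norm_num) hs1
      linarith
    calc Tm s (1 - β/Real.sqrt s) m₀
        = Real.exp (Real.log (Tm s (1 - β/Real.sqrt s) m₀)) := (Real.exp_log hTpos).symm
    _ ≤ Gbound β x := by unfold Gbound; exact Real.exp_le_exp.2 hstep
  · rw [Fstep_zero β s x hspos hx]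
    simp only [norm_zero]
    unfold Gbound
    exact (Real.exp_pos _).le

noncomputable def Llim (β : ℝ) (x : ℝ) : ℝ :=
  Set.indicator (Set.Ioi 0) (fun x => Real.exp (β*x - x^2/2)) x

lemma Llim_tendsto_ae (β : ℝ) :
    ∀ᵐ x : ℝ, Tendsto (fun s : ℕ => Fstep β s x) atTop (nhds (Llim β x)) := by
  have h0 : ∀ᵐ x : ℝ, x ≠ (0:ℝ) := by
    rw [MeasureTheory.ae_iff]
    simp only [not_not]
    have : {x : ℝ | x = 0} = {(0:ℝ)} := by ext y; simp
    rw [this, Real.volume_singleton]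
  filter_upwards [h0] with x hx
  rcases hx.lt_or_gt with hneg | hpos
  · have hL : Llim β x = 0 := Set.indicator_of_notMem (by simp; linarith) _
    rw [hL]
    apply tendsto_const_nhds.congr'
    filter_upwards [eventually_gt_atTop 0] with s hs
    exact (Fstep_zero β s x hs (by simp; intro h; linarith)).symm
  · have hL : Llim β x = Real.exp (β*x - x^2/2) := Set.indicator_of_mem hpos _
    rw [hL]
    apply (Tm_ceil_tendsto β x hpos).congr'
    filter_upwards [eventually_gt_atTop 0, sqrt_nat_tendsto.eventually_ge_atTop x] with s hs hxs
    exact (Fstep_val β s x hs hpos hxs).symm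

lemma integrable_exp_quad (β : ℝ) :
    MeasureTheory.Integrable (fun x : ℝ => Real.exp (β*x - x^2/2)) := by
  have hfun : (fun x : ℝ => Real.exp (β*x - x^2/2))
      = fun x : ℝ => Real.exp (-x^2/2 + β*x + 0) := by
    funext x; congr 1; ring
  rw [hfun]
  exact integrable_gauss_shift β 0

lemma Llim_integral (β : ℝ) :
    ∫ x, Llim β x = Real.exp (β^2/2) * ∫ y in Set.Iic β, Real.exp (-y^2/2) := by
  have h1 : ∀ x : ℝ, Llim β x
      = Real.exp (β^2/2) *
        Set.indicator (Set.Ioi (-β)) (fun y => Real.exp (-y^2/2)) (x - β) := by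
    intro x
    by_cases hx : x ∈ Set.Ioi (0:ℝ)
    · rw [Llim, Set.indicator_of_mem hx, Set.indicator_of_mem (by simp at hx ⊢; linarith)]
      rw [← Real.exp_add]
      congr 1
      ring
    · rw [Llim, Set.indicator_of_notMem hx, Set.indicator_of_notMem (by simp at hx ⊢; linarith)]
      rw [mul_zero]
  calc ∫ x, Llim β x
      = ∫ x, Real.exp (β^2/2) *
          Set.indicator (Set.Ioi (-β)) (fun y => Real.exp (-y^2/2)) (x - β) := by
        simp only [h1]
  _ = Real.exp (β^2/2) * ∫ x, Set.indicator (Set.Ioi (-β))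
        (fun y => Real.exp (-y^2/2)) (x - β) := MeasureTheory.integral_const_mul _ _
  _ = Real.exp (β^2/2) * ∫ x, Set.indicator (Set.Ioi (-β))
        (fun y => Real.exp (-y^2/2)) x := by
        rw [MeasureTheory.integral_sub_right_eq_self
          (Set.indicator (Set.Ioi (-β)) (fun y => Real.exp (-y^2/2))) β]
  _ = Real.exp (β^2/2) * ∫ y in Set.Ioi (-β), Real.exp (-y^2/2) := by
        rw [MeasureTheory.integral_indicator measurableSet_Ioi]
  _ = Real.exp (β^2/2) * ∫ y in Set.Iic β, Real.exp (-y^2/2) := by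
        congr 1
        have e : ∫ x in Set.Ioi (-β), Real.exp (-x^2/2)
            = ∫ x in Set.Ioi (-β), Real.exp (-(-x)^2/2) := by
          simp only [neg_sq]
        have h2 := integral_comp_neg_Ioi (-β) (fun y : ℝ => Real.exp (-y^2/2))
        rw [e, h2, neg_neg]

lemma Llim_integral_eq_Ioi (β : ℝ) :
    ∫ x, Llim β x = ∫ x in Set.Ioi (0:ℝ), Real.exp (β*x - x^2/2) :=
  MeasureTheory.integral_indicator measurableSet_Ioi

lemma Llim_integral_pos (β : ℝ) : 0 < ∫ x, Llim β x := by
  rw [Llim_integral_eq_Ioi]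
  rw [MeasureTheory.setIntegral_pos_iff_support_of_nonneg_ae
    (MeasureTheory.ae_of_all _ fun x => (Real.exp_pos _).le)
    ((integrable_exp_quad β).integrableOn)]
  have hsupp : Function.support (fun x : ℝ => Real.exp (β*x - x^2/2)) = Set.univ := by
    ext x; simp [Real.exp_ne_zero]
  rw [hsupp, Set.univ_inter, Real.volume_Ioi]
  exact ENNReal.zero_lt_top

lemma ratio_eq (β : ℝ) :
    normalCDF β / normalPDF β = Real.exp (β^2/2) * ∫ y in Set.Iic β, Real.exp (-y^2/2) := by
  rw [normalCDF, normalPDF]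
  have h2π : Real.sqrt (2*Real.pi) ≠ 0 := by
    have := Real.pi_pos
    positivity
  have hexp : Real.exp (-β^2/2) ≠ 0 := Real.exp_ne_zero _
  have hee : Real.exp (β^2/2) * Real.exp (-β^2/2) = 1 := by
    rw [← Real.exp_add]
    have h0 : β^2/2 + -β^2/2 = 0 := by ring
    rw [h0, Real.exp_zero]
  rw [div_div_eq_mul_div, div_eq_iff hexp]
  field_simp
  have hee' : Real.exp (β^2/2) * Real.exp (-(β^2/2)) = 1 := by rw [← neg_div]; exact hee
  linear_combination (-(∫ v in Set.Iic β, Real.exp (-(v ^ 2 / 2)))) * hee'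

lemma geom_eq_aux (r b q : ℝ) (hb : b ≠ 0) (hq : q ≠ 0) (n : ℕ)
    (hr : r - 1 = -(b/q)) (hrne : r ≠ 1) :
    ∑ k ∈ Finset.range n, r^k = (1 - r^n) * q / b := by
  rw [geom_sum_eq hrne, hr, div_neg, div_div_eq_mul_div, ← neg_div]
  congr 1
  ring

lemma a_limit (β : ℝ) :
    Tendsto (fun s : ℕ =>
        (Real.sqrt s)⁻¹ * ∑ m ∈ Finset.Icc 1 s, Tm s (1 - β/Real.sqrt s) m)
      atTop (nhds (normalCDF β / normalPDF β)) := by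
  have hdct := MeasureTheory.tendsto_integral_filter_of_dominated_convergence
    (μ := MeasureTheory.volume) (F := fun s : ℕ => Fstep β s) (f := Llim β) (Gbound β)
    (Filter.Eventually.of_forall fun s => (Fstep_meas β s).aestronglyMeasurable)
    (by filter_upwards [Fstep_bound β] with s h; exact MeasureTheory.ae_of_all _ h)
    (Gbound_integrable β) (Llim_tendsto_ae β)
  have hval : ∫ x, Llim β x = normalCDF β / normalPDF β := by
    rw [Llim_integral, ← ratio_eq]
  rw [hval] at hdct
  refine hdct.congr' ?_
  filter_upwards [eventually_gt_atTop 0] with s hs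
  exact Fstep_integral β s hs

lemma R_pos (β : ℝ) : 0 < normalCDF β / normalPDF β := by
  have h := Llim_integral_pos β
  rw [Llim_integral β] at h
  rw [ratio_eq β]
  exact h

theorem delay_probability_qed (η β : ℝ) (hη : 0 < η) (hβ : β ≠ 0) (K : ℕ → ℕ)
    (hK : ∀ s, 0 < K s)
    (hlim : Tendsto (fun s : ℕ => (K s : ℝ) / Real.sqrt s) atTop (nhds η)) :
    Tendsto (fun s : ℕ =>
        ∑ i ∈ Finset.Icc s (s + K s), statPi s (K s) (1 - β / Real.sqrt s) i)
      atTop (nhds ((1 - Real.exp (-(β * η))) * hfun η β)) := by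
  set E := Real.exp (-(β * η)) with hE
  set R := normalCDF β / normalPDF β with hR
  set c := (1 - E)/β with hcdef
  have hRpos : 0 < R := R_pos β
  have hcpos : 0 < c := by
    rcases lt_or_gt_of_ne hβ with hb | hb
    · have hE1 : 1 < E := by
        rw [hE, show (1:ℝ) = Real.exp 0 by rw [Real.exp_zero]]
        rw [Real.exp_lt_exp]
        nlinarith
      rw [hcdef]
      apply div_pos_of_neg_of_neg (by linarith) hb
    · have hE1 : E < 1 := by
        rw [hE, show (1:ℝ) = Real.exp 0 by rw [Real.exp_zero]]
        rw [Real.exp_lt_exp]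
        nlinarith
      rw [hcdef]
      exact div_pos (by linarith) hb
  have hRc : 0 < R + c := by linarith
  -- the limit value equals (1-E) * hfun η β
  have hval : c / (R + c) = (1 - E) * hfun η β := by
    have hc : β * c = 1 - E := by rw [hcdef]; field_simp
    have hdeneq : 1 - E + β * R = β * (c + R) := by rw [← hc]; ring
    calc c/(R+c) = (β*c)/(β*(c+R)) := by rw [mul_div_mul_left _ _ hβ, add_comm]
    _ = (1-E) * (1/(β*(c+R))) := by rw [hc, div_eq_mul_one_div]
    _ = (1-E) * hfun η β := by rw [hfun, mul_div_assoc, ← hR, ← hE, hdeneq]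
  rw [← hval]
  -- limits of the two normalized sums
  have hn : Tendsto (fun s : ℕ => (1 - (1 - β/Real.sqrt s)^(K s+1))/β) atTop (nhds c) := by
    rw [hcdef, hE]
    exact (tendsto_const_nhds.sub (rho_pow_tendsto η β K hlim)).div_const β
  have ha : Tendsto (fun s : ℕ =>
      (Real.sqrt s)⁻¹ * ∑ m ∈ Finset.Icc 1 s, Tm s (1 - β/Real.sqrt s) m)
      atTop (nhds R) := a_limit β
  have hdiv := hn.div (ha.add hn) hRc.ne'
  refine hdiv.congr' ?_
  filter_upwards [rho_pos_ev β, eventually_gt_atTop 0,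
    sqrt_nat_tendsto.eventually_gt_atTop 0] with s hρ hs hq
  -- notation
  set ρ := 1 - β/Real.sqrt s with hρdef
  set GS := ∑ k ∈ Finset.range (K s+1), ρ^k with hGSdef
  set TS := ∑ m ∈ Finset.Icc 1 s, Tm s ρ m with hTSdef
  set w := ((s:ℝ)*ρ)^s / (Nat.factorial s) with hwdef
  have hsρ : (0:ℝ) < (s:ℝ)*ρ := by
    have : (0:ℝ) < s := by exact_mod_cast hs
    positivity
  have hw : 0 < w := by
    rw [hwdef]
    have : (0:ℝ) < (Nat.factorial s : ℝ) := by positivity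
    positivity
  have hGSpos : 0 < GS := by
    rw [hGSdef]
    apply Finset.sum_pos (fun k _ => pow_pos hρ k)
    exact Finset.nonempty_range_iff.2 (Nat.succ_ne_zero _)
  have hTSnn : 0 ≤ TS := by
    rw [hTSdef]
    apply Finset.sum_nonneg
    intro m hm
    rw [Finset.mem_Icc] at hm
    exact (Tm_pos s m ρ hm.2 hs hρ).le
  have hρne1 : ρ ≠ 1 := by
    rw [hρdef]
    intro h
    have h2 : β/Real.sqrt s = 0 := by linarith
    rcases div_eq_zero_iff.1 h2 with h3 | h3
    · exact hβ h3
    · exact hq.ne' h3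
  -- geometric sum
  have hGSeq : GS = (1 - ρ^(K s+1)) * Real.sqrt s / β := by
    rw [hGSdef]
    exact geom_eq_aux ρ β (Real.sqrt s) hβ hq.ne' (K s+1) (by rw [hρdef]; ring) hρne1
  have hGSn : (1 - ρ^(K s+1))/β = GS * (Real.sqrt s)⁻¹ := by
    rw [hGSeq]
    field_simp
  -- sum decomposition
  have hS : ∑ j ∈ Finset.range (s + K s + 1), statw s ρ j
      = w * TS + w * GS := by
    have hsplit : ∑ j ∈ Finset.range (s + K s + 1), statw s ρ j
        = (∑ j ∈ Finset.range s, statw s ρ j)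
          + ∑ i ∈ Finset.Icc s (s + K s), statw s ρ i := by
      rw [Finset.range_eq_Ico, ← Finset.Ico_add_one_right_eq_Icc,
        ← Finset.sum_Ico_consecutive _ (Nat.zero_le s) (by omega), ← Finset.range_eq_Ico]
    rw [hsplit, sum_den s ρ hsρ.ne', sum_num, ← hTSdef, ← hGSdef, ← hwdef]
  -- final computation
  have hDeq : ∑ i ∈ Finset.Icc s (s + K s), statPi s (K s) ρ i
      = GS/(TS + GS) := by
    simp only [statPi]
    rw [← Finset.sum_div, hS, sum_num, ← hGSdef, ← hwdef, ← mul_add,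
      mul_div_mul_left _ _ hw.ne']
  simp only [Pi.div_apply]
  rw [hDeq, hGSn]
  have hTSn : (Real.sqrt s)⁻¹ * TS = TS * (Real.sqrt s)⁻¹ := mul_comm _ _
  rw [hTSn, ← add_mul, mul_div_mul_right _ _ (inv_ne_zero hq.ne')]
end

section
/- The improper Riemann integral ∫_0^∞ Φ(−u) (1 − e^{u²/2} Φ(−u)) du equals (1 − log √2)/√(2π), i.e. (1 − (1/2) log 2)/√(2π). -/
open Real

open Set MeasureTheory Filter Topology

lemma gauss_integrable : Integrable (fun v : ℝ => Real.exp (-v ^ 2 / 2)) := by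
  have := integrable_exp_neg_mul_sq (b := (1:ℝ)/2) (by norm_num)
  convert this using 2 with v
  ring_nf

lemma normalCDF_neg (u : ℝ) :
    normalCDF (-u) = (Real.sqrt (2 * Real.pi))⁻¹ * ∫ v in Set.Ioi u, Real.exp (-v ^ 2 / 2) := by
  unfold normalCDF
  congr 1
  have := integral_comp_neg_Iic (-u) (fun v : ℝ => Real.exp (-v ^ 2 / 2))
  simp only [neg_neg] at this
  rw [← this]
  congr 1 with v
  ring_nf

lemma normalCDF_neg_nonneg (u : ℝ) : 0 ≤ normalCDF (-u) := by
  rw [normalCDF_neg]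
  apply mul_nonneg (inv_nonneg.2 (Real.sqrt_nonneg _))
  exact setIntegral_nonneg measurableSet_Ioi (fun v _ => (Real.exp_pos _).le)

lemma hasDerivAt_N (u : ℝ) :
    HasDerivAt (fun x => normalCDF (-x))
      (-((Real.sqrt (2 * Real.pi))⁻¹ * Real.exp (-u ^ 2 / 2))) u := by
  have key : ∀ x : ℝ, normalCDF (-x)
      = (Real.sqrt (2 * Real.pi))⁻¹ *
        ((∫ v, Real.exp (-v ^ 2 / 2)) - ((∫ v in Set.Iic (0:ℝ), Real.exp (-v ^ 2 / 2)) +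
          ∫ v in (0:ℝ)..x, Real.exp (-v ^ 2 / 2))) := by
    intro x
    rw [normalCDF_neg]
    congr 1
    have h1 : (∫ v in Set.Iic x, Real.exp (-v ^ 2 / 2)) + ∫ v in Set.Ioi x, Real.exp (-v ^ 2 / 2)
        = ∫ v, Real.exp (-v ^ 2 / 2) := by
      rw [← integral_add_compl (measurableSet_Iic) gauss_integrable, compl_Iic]
    have h2 : (∫ v in (0:ℝ)..x, Real.exp (-v ^ 2 / 2))
        = (∫ v in Set.Iic x, Real.exp (-v ^ 2 / 2)) - ∫ v in Set.Iic (0:ℝ), Real.exp (-v ^ 2 / 2) :=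
      (intervalIntegral.integral_Iic_sub_Iic gauss_integrable.integrableOn
        gauss_integrable.integrableOn).symm
    rw [h2]
    linarith
  have hd : HasDerivAt (fun x => ∫ v in (0:ℝ)..x, Real.exp (-v ^ 2 / 2))
      (Real.exp (-u ^ 2 / 2)) u := by
    refine intervalIntegral.integral_hasDerivAt_right
      (gauss_integrable.intervalIntegrable) ?_ ?_
    · exact gauss_integrable.1.stronglyMeasurableAtFilter
    · exact (Real.continuous_exp.comp (by continuity)).continuousAt
  have h2 := ((hd.const_add (∫ v in Set.Iic (0:ℝ), Real.exp (-v ^ 2 / 2))).const_sub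
    (∫ v, Real.exp (-v ^ 2 / 2))).const_mul ((Real.sqrt (2 * Real.pi))⁻¹ : ℝ)
  simp only [funext key]
  refine h2.congr_deriv (Eq.symm ?_)
  ring


lemma hasDerivAt_gaussexp (u : ℝ) :
    HasDerivAt (fun x : ℝ => Real.exp (-x ^ 2 / 2)) (-(u * Real.exp (-u ^ 2 / 2))) u := by
  have h : HasDerivAt (fun x : ℝ => -x ^ 2 / 2) (-u) u := by
    have := ((hasDerivAt_pow 2 u).neg).div_const 2
    refine this.congr_deriv (Eq.symm ?_); push_cast; ring
  convert h.exp using 1; ring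

lemma vgauss_integrable : Integrable (fun v : ℝ => v * Real.exp (-v ^ 2 / 2)) := by
  have := integrable_mul_exp_neg_mul_sq (b := (1:ℝ)/2) (by norm_num)
  convert this using 2 with v; ring_nf

lemma tendsto_neg_sq_half : Tendsto (fun x : ℝ => -x ^ 2 / 2) atTop atBot := by
  have h : Tendsto (fun x : ℝ => x ^ 2) atTop atTop := tendsto_pow_atTop two_ne_zero
  have h2 := (tendsto_neg_atTop_atBot.comp h).atBot_div_const (by norm_num : (0:ℝ) < 2)
  convert h2 using 2 with x
  rfl

lemma gaussexp_tendsto_zero : Tendsto (fun x : ℝ => Real.exp (-x ^ 2 / 2)) atTop (𝓝 0) :=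
  Real.tendsto_exp_atBot.comp tendsto_neg_sq_half

lemma moment1 (u : ℝ) :
    ∫ v in Set.Ioi u, v * Real.exp (-v ^ 2 / 2) = Real.exp (-u ^ 2 / 2) := by
  have ht : Tendsto (fun x : ℝ => -Real.exp (-x ^ 2 / 2)) atTop (𝓝 0) := by
    rw [show (0:ℝ) = -0 by ring]; exact gaussexp_tendsto_zero.neg
  have h := integral_Ioi_of_hasDerivAt_of_tendsto' (a := u) (m := 0)
    (f := fun x : ℝ => -Real.exp (-x ^ 2 / 2))
    (f' := fun v : ℝ => v * Real.exp (-v ^ 2 / 2))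
    (fun x _ => by simpa using (hasDerivAt_gaussexp x).fun_neg)
    (vgauss_integrable.integrableOn) ht
  simpa using h

lemma mills_bound {u : ℝ} (hu : 0 < u) :
    normalCDF (-u) ≤ (Real.sqrt (2 * Real.pi))⁻¹ * (Real.exp (-u ^ 2 / 2) / u) := by
  rw [normalCDF_neg]
  apply mul_le_mul_of_nonneg_left _ (inv_nonneg.2 (Real.sqrt_nonneg _))
  have hint2 : IntegrableOn (fun v : ℝ => (v / u) * Real.exp (-v ^ 2 / 2)) (Set.Ioi u) := by
    have h := (vgauss_integrable.integrableOn (s := Set.Ioi u)).div_const u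
    apply h.congr
    filter_upwards with v
    ring
  have hle : ∫ v in Set.Ioi u, Real.exp (-v ^ 2 / 2)
      ≤ ∫ v in Set.Ioi u, (v / u) * Real.exp (-v ^ 2 / 2) := by
    apply setIntegral_mono_on gauss_integrable.integrableOn hint2 measurableSet_Ioi
    intro v hv
    have h1 : (1:ℝ) ≤ v / u := (le_div_iff₀ hu).2 (by simpa using (le_of_lt hv))
    nth_rewrite 1 [show Real.exp (-v ^ 2 / 2) = 1 * Real.exp (-v ^ 2 / 2) by ring]
    exact mul_le_mul_of_nonneg_right h1 (Real.exp_pos _).le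
  have heq : ∫ v in Set.Ioi u, (v / u) * Real.exp (-v ^ 2 / 2) = Real.exp (-u ^ 2 / 2) / u := by
    rw [show (fun v : ℝ => (v / u) * Real.exp (-v ^ 2 / 2))
        = (fun v : ℝ => (v * Real.exp (-v ^ 2 / 2)) / u) by funext v; ring]
    rw [integral_div, moment1]
  rw [← heq]; exact hle

lemma uN_tendsto : Tendsto (fun u : ℝ => u * normalCDF (-u)) atTop (𝓝 0) := by
  have hb : ∀ᶠ u in atTop, u * normalCDF (-u)
      ≤ (Real.sqrt (2 * Real.pi))⁻¹ * Real.exp (-u ^ 2 / 2) := by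
    filter_upwards [eventually_gt_atTop (0:ℝ)] with u hu
    calc u * normalCDF (-u) ≤ u * ((Real.sqrt (2 * Real.pi))⁻¹ * (Real.exp (-u ^ 2 / 2) / u)) :=
          mul_le_mul_of_nonneg_left (mills_bound hu) hu.le
      _ = (Real.sqrt (2 * Real.pi))⁻¹ * Real.exp (-u ^ 2 / 2) := by
          field_simp
  have h0 : ∀ᶠ u in atTop, 0 ≤ u * normalCDF (-u) := by
    filter_upwards [eventually_ge_atTop (0:ℝ)] with u hu
    exact mul_nonneg hu (normalCDF_neg_nonneg u)
  have hlim : Tendsto (fun u : ℝ => (Real.sqrt (2 * Real.pi))⁻¹ * Real.exp (-u ^ 2 / 2))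
      atTop (𝓝 0) := by
    simpa using gaussexp_tendsto_zero.const_mul ((Real.sqrt (2 * Real.pi))⁻¹ : ℝ)
  exact tendsto_of_tendsto_of_tendsto_of_le_of_le' tendsto_const_nhds hlim h0 hb

lemma part1a : IntegrableOn (fun u : ℝ => normalCDF (-u)) (Set.Ioi 0) ∧
    ∫ u in Set.Ioi (0:ℝ), normalCDF (-u) = (Real.sqrt (2 * Real.pi))⁻¹ := by
  set c : ℝ := (Real.sqrt (2 * Real.pi))⁻¹ with hc
  have hderiv : ∀ x ∈ Set.Ici (0:ℝ), HasDerivAt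
      (fun u : ℝ => u * normalCDF (-u) - c * Real.exp (-u ^ 2 / 2)) (normalCDF (-x)) x := by
    intro x _
    have h1 := (hasDerivAt_id x).mul (hasDerivAt_N x)
    have h2 := (hasDerivAt_gaussexp x).const_mul c
    refine (h1.sub h2).congr_deriv (Eq.symm ?_)
    simp only [id_eq]
    ring
  have hpos : ∀ x ∈ Set.Ioi (0:ℝ), 0 ≤ normalCDF (-x) := fun x _ => normalCDF_neg_nonneg x
  have htend : Tendsto (fun u : ℝ => u * normalCDF (-u) - c * Real.exp (-u ^ 2 / 2))
      atTop (𝓝 0) := by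
    rw [show (0:ℝ) = 0 - c * 0 by ring]
    exact uN_tendsto.sub ((gaussexp_tendsto_zero.const_mul c))
  constructor
  · exact integrableOn_Ioi_deriv_of_nonneg' hderiv hpos htend
  · have := integral_Ioi_of_hasDerivAt_of_nonneg' hderiv hpos htend
    simpa using this


lemma hasDerivAt_qexp {q : ℝ} (u : ℝ) :
    HasDerivAt (fun x : ℝ => Real.exp (-(q * x ^ 2) / 2)) (-(q * u) * Real.exp (-(q * u ^ 2) / 2)) u := by
  have h : HasDerivAt (fun x : ℝ => -(q * x ^ 2) / 2) (-(q * u)) u := by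
    have := (((hasDerivAt_pow 2 u).const_mul q).neg).div_const 2
    refine this.congr_deriv (Eq.symm ?_); push_cast; ring
  convert h.exp using 1; ring

lemma qexp_tendsto_zero {q : ℝ} (hq : 0 < q) :
    Tendsto (fun x : ℝ => Real.exp (-(q * x ^ 2) / 2)) atTop (𝓝 0) := by
  apply Real.tendsto_exp_atBot.comp
  have h : Tendsto (fun x : ℝ => x ^ 2) atTop atTop := tendsto_pow_atTop two_ne_zero
  have h2 := (tendsto_neg_atTop_atBot.comp (h.const_mul_atTop hq)).atBot_div_const
    (by norm_num : (0:ℝ) < 2)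
  convert h2 using 2 with x
  rfl

lemma xqexp_tendsto_zero {q : ℝ} (hq : 0 < q) :
    Tendsto (fun x : ℝ => x * Real.exp (-(q * x ^ 2) / 2)) atTop (𝓝 0) := by
  have hb : 0 < q / 2 := by linarith
  have h := (rpow_mul_exp_neg_mul_sq_isLittleO_exp_neg hb 1).tendsto_zero_of_tendsto
    (Real.tendsto_exp_atBot.comp (tendsto_id.const_mul_atTop_of_neg
      (neg_lt_zero.mpr one_half_pos)))
  apply h.congr'
  filter_upwards [eventually_gt_atTop (0:ℝ)] with x hx
  rw [Real.rpow_one]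
  congr 1
  ring

lemma sq_qexp_integrableOn {q : ℝ} (hq : 0 < q) :
    IntegrableOn (fun u : ℝ => u ^ 2 * Real.exp (-(q * u ^ 2) / 2)) (Set.Ioi 0) := by
  have hb : 0 < q / 2 := by linarith
  have h := integrableOn_rpow_mul_exp_neg_mul_sq hb (by norm_num : (-1:ℝ) < 2)
  apply h.congr_fun _ measurableSet_Ioi
  intro x hx
  have hx2 : (x:ℝ) ^ (2:ℝ) = x ^ 2 := by
    rw [show (2:ℝ) = ((2:ℕ):ℝ) by norm_num, Real.rpow_natCast]
  simp only [hx2]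
  congr 1
  ring

lemma qexp_integrableOn {q : ℝ} (hq : 0 < q) :
    IntegrableOn (fun u : ℝ => Real.exp (-(q * u ^ 2) / 2)) (Set.Ioi 0) := by
  have hb : 0 < q / 2 := by linarith
  have h := (integrable_exp_neg_mul_sq hb).integrableOn (s := Set.Ioi 0)
  apply h.congr
  filter_upwards with x
  congr 1
  ring

lemma moment2 {q : ℝ} (hq : 0 < q) :
    ∫ u in Set.Ioi (0:ℝ), u ^ 2 * Real.exp (-(q * u ^ 2) / 2)
      = Real.sqrt (2 * Real.pi) / (2 * q * Real.sqrt q) := by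
  have hb : 0 < q / 2 := by linarith
  set e : ℝ → ℝ := fun u => Real.exp (-(q * u ^ 2) / 2) with he
  have hderiv : ∀ x ∈ Set.Ici (0:ℝ), HasDerivAt (fun u : ℝ => -(u / q) * e u)
      (x ^ 2 * e x - (1 / q) * e x) x := by
    intro x _
    have h1 := ((hasDerivAt_id x).div_const q).neg.mul (hasDerivAt_qexp (q := q) x)
    refine h1.congr_deriv (Eq.symm ?_)
    simp only [he, Pi.neg_apply, id_eq]
    field_simp
    ring
  have hint : IntegrableOn (fun x : ℝ => x ^ 2 * e x - (1 / q) * e x) (Set.Ioi 0) :=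
    (sq_qexp_integrableOn hq).sub ((qexp_integrableOn hq).const_mul _)
  have htend : Tendsto (fun u : ℝ => -(u / q) * e u) atTop (𝓝 0) := by
    rw [show (0:ℝ) = -(1/q) * 0 by ring]
    have := ((xqexp_tendsto_zero hq).const_mul (-(1/q)))
    apply this.congr
    intro x
    simp only [he]; ring
  have hftc := integral_Ioi_of_hasDerivAt_of_tendsto' hderiv hint htend
  simp only [he] at hftc ⊢
  rw [show (fun u : ℝ => u ^ 2 * Real.exp (-(q * u ^ 2) / 2)) = fun u : ℝ =>
    (u ^ 2 * Real.exp (-(q * u ^ 2) / 2) - (1/q) * Real.exp (-(q * u ^ 2) / 2))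
      + (1/q) * Real.exp (-(q * u ^ 2) / 2) from funext (fun u => by ring)]
  rw [integral_add hint ((qexp_integrableOn hq).const_mul _), hftc]
  rw [integral_const_mul]
  have hg : ∫ u in Set.Ioi (0:ℝ), Real.exp (-(q * u ^ 2) / 2) = Real.sqrt (Real.pi / (q/2)) / 2 := by
    rw [← integral_gaussian_Ioi (q/2)]
    congr 1 with u
    congr 1
    ring
  rw [hg]
  have hsq : Real.sqrt (Real.pi / (q/2)) = Real.sqrt (2 * Real.pi) / Real.sqrt q := by
    rw [show Real.pi / (q/2) = (2 * Real.pi) / q by field_simp]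
    exact Real.sqrt_div (by positivity) q
  rw [hsq]
  have hq' : Real.sqrt q > 0 := Real.sqrt_pos.2 hq
  rw [show -(q * (0:ℝ) ^ 2) / 2 = 0 by ring, Real.exp_zero]
  field_simp
  ring


lemma int_s {r : ℝ} (hr : 1 < r) :
    IntegrableOn (fun s : ℝ => 1 / ((s ^ 2 + r ^ 2 - 1) * Real.sqrt (s ^ 2 + r ^ 2 - 1)))
      (Set.Ioi 1) ∧
    ∫ s in Set.Ioi (1:ℝ), 1 / ((s ^ 2 + r ^ 2 - 1) * Real.sqrt (s ^ 2 + r ^ 2 - 1))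
      = 1 / (r * (r + 1)) := by
  have hr0 : 0 < r := lt_trans one_pos hr
  set c : ℝ := r ^ 2 - 1 with hc
  have hcpos : 0 < c := by nlinarith
  have hkey : ∀ s : ℝ, s ^ 2 + r ^ 2 - 1 = s ^ 2 + c := fun s => by rw [hc]; ring
  have hqpos : ∀ s : ℝ, 0 < s ^ 2 + c := fun s => by positivity
  have hderiv : ∀ x ∈ Set.Ici (1:ℝ), HasDerivAt (fun s : ℝ => s / (c * Real.sqrt (s ^ 2 + c)))
      (1 / ((x ^ 2 + r ^ 2 - 1) * Real.sqrt (x ^ 2 + r ^ 2 - 1))) x := by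
    intro x _
    have hq : HasDerivAt (fun s : ℝ => s ^ 2 + c) (2 * x) x := by
      simpa using (hasDerivAt_pow 2 x).add_const c
    have hsq : HasDerivAt (fun s : ℝ => Real.sqrt (s ^ 2 + c))
        (2 * x / (2 * Real.sqrt (x ^ 2 + c))) x := hq.sqrt (hqpos x).ne'
    have hden : HasDerivAt (fun s : ℝ => c * Real.sqrt (s ^ 2 + c))
        (c * (2 * x / (2 * Real.sqrt (x ^ 2 + c)))) x := hsq.const_mul c
    have hspos : 0 < Real.sqrt (x ^ 2 + c) := Real.sqrt_pos.2 (hqpos x)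
    have hdne : c * Real.sqrt (x ^ 2 + c) ≠ 0 := by positivity
    have h := (hasDerivAt_id x).div hden hdne
    refine h.congr_deriv (Eq.symm ?_)
    rw [hkey]
    simp only [id_eq]
    have hss : Real.sqrt (x ^ 2 + c) ^ 2 = x ^ 2 + c := Real.sq_sqrt (hqpos x).le
    field_simp
    linear_combination (-x ^ 2) * hss
  have hnonneg : ∀ x ∈ Set.Ioi (1:ℝ),
      0 ≤ 1 / ((x ^ 2 + r ^ 2 - 1) * Real.sqrt (x ^ 2 + r ^ 2 - 1)) := by
    intro x _
    rw [hkey]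
    positivity
  have htend : Tendsto (fun s : ℝ => s / (c * Real.sqrt (s ^ 2 + c))) atTop (𝓝 (1 / c)) := by
    have h1 : Tendsto (fun s : ℝ => 1 + c / s ^ 2) atTop (𝓝 1) := by
      have h2 : Tendsto (fun s : ℝ => c / s ^ 2) atTop (𝓝 0) :=
        Tendsto.div_atTop tendsto_const_nhds (tendsto_pow_atTop two_ne_zero)
      simpa using tendsto_const_nhds.add h2
    have h3 : Tendsto (fun s : ℝ => Real.sqrt (1 + c / s ^ 2)) atTop (𝓝 1) := by
      have := (Real.continuous_sqrt.tendsto 1).comp h1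
      rw [Real.sqrt_one] at this
      exact this
    have h4 : Tendsto (fun s : ℝ => 1 / (c * Real.sqrt (1 + c / s ^ 2))) atTop (𝓝 (1 / c)) := by
      have h5 := (tendsto_const_nhds (x := (1:ℝ))).div (h3.const_mul c) (by simpa using hcpos.ne')
      have h6 : Tendsto (fun s : ℝ => 1 / (c * Real.sqrt (1 + c / s ^ 2))) atTop (𝓝 (1 / (c * 1))) := h5
      simpa using h6
    apply h4.congr'
    filter_upwards [eventually_gt_atTop (0:ℝ)] with s hs
    have hsne : s ≠ 0 := hs.ne'
    have hfac : s ^ 2 + c = s ^ 2 * (1 + c / s ^ 2) := by field_simp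
    rw [hfac, Real.sqrt_mul (sq_nonneg s), Real.sqrt_sq hs.le]
    have hspos : 0 < Real.sqrt (1 + c / s ^ 2) := Real.sqrt_pos.2 (by positivity)
    field_simp
  have hIcc := integrableOn_Ioi_deriv_of_nonneg' hderiv hnonneg htend
  refine ⟨hIcc, ?_⟩
  have h := integral_Ioi_of_hasDerivAt_of_nonneg' hderiv hnonneg htend
  rw [h]
  have h1c : (1:ℝ) ^ 2 + c = r ^ 2 := by rw [hc]; ring
  rw [h1c, Real.sqrt_sq hr0.le]
  rw [hc]
  have : r ^ 2 - 1 ≠ 0 := by nlinarith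
  field_simp
  ring

lemma int_r :
    IntegrableOn (fun r : ℝ => 1 / (r * (r + 1))) (Set.Ioi 1) ∧
    ∫ r in Set.Ioi (1:ℝ), 1 / (r * (r + 1)) = Real.log 2 := by
  have hderiv : ∀ x ∈ Set.Ici (1:ℝ), HasDerivAt (fun r : ℝ => Real.log r - Real.log (r + 1))
      (1 / (x * (x + 1))) x := by
    intro x hx
    have hx0 : (0:ℝ) < x := lt_of_lt_of_le one_pos hx
    have h1 : HasDerivAt (fun r : ℝ => Real.log r) (1 / x) x := by
      simpa using Real.hasDerivAt_log hx0.ne'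
    have h2 : HasDerivAt (fun r : ℝ => Real.log (r + 1)) (1 / (x + 1)) x := by
      have := ((hasDerivAt_id x).add_const (1:ℝ)).log (by positivity)
      simpa using this
    refine (h1.sub h2).congr_deriv (Eq.symm ?_)
    field_simp
    ring
  have hnonneg : ∀ x ∈ Set.Ioi (1:ℝ), 0 ≤ 1 / (x * (x + 1)) := by
    intro x hx
    have : (0:ℝ) < x := lt_trans one_pos hx
    positivity
  have htend : Tendsto (fun r : ℝ => Real.log r - Real.log (r + 1)) atTop (𝓝 0) := by
    have h1 : Tendsto (fun r : ℝ => 1 + 1 / r) atTop (𝓝 1) := by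
      simpa [one_div] using (tendsto_const_nhds (x := (1:ℝ))).add tendsto_inv_atTop_zero
    have h2 : Tendsto (fun r : ℝ => -Real.log (1 + 1 / r)) atTop (𝓝 0) := by
      have := ((Real.continuousAt_log one_ne_zero).tendsto.comp h1).neg
      simpa using this
    apply h2.congr'
    filter_upwards [eventually_gt_atTop (0:ℝ)] with r hr
    have hr1 : (0:ℝ) < r + 1 := by linarith
    rw [show 1 + 1 / r = (r + 1) / r by field_simp, Real.log_div hr1.ne' hr.ne']
    ring
  have hI := integrableOn_Ioi_deriv_of_nonneg' hderiv hnonneg htend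
  refine ⟨hI, ?_⟩
  have h := integral_Ioi_of_hasDerivAt_of_nonneg' hderiv hnonneg htend
  rw [h]
  norm_num


noncomputable def kk (u s r : ℝ) : ℝ := u ^ 2 * Real.exp (-((s ^ 2 + r ^ 2 - 1) * u ^ 2) / 2)

lemma kk_nonneg (u s r : ℝ) : 0 ≤ kk u s r := by unfold kk; positivity

lemma kk_continuous : Continuous (fun p : ℝ × ℝ × ℝ => kk p.1 p.2.1 p.2.2) := by
  unfold kk; fun_prop

noncomputable def GG (u : ℝ) : ℝ := ∫ s in Set.Ioi (1:ℝ), Real.exp (-(u * s) ^ 2 / 2)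

lemma scale {u : ℝ} (hu : 0 < u) :
    ∫ v in Set.Ioi u, Real.exp (-v ^ 2 / 2) = u * GG u := by
  have h := integral_comp_mul_left_Ioi (fun v => Real.exp (-v ^ 2 / 2)) 1 hu
  simp only [mul_one, smul_eq_mul] at h
  unfold GG
  rw [show (fun s : ℝ => Real.exp (-(u * s) ^ 2 / 2)) = fun s : ℝ => Real.exp (-(u * s) ^ 2 / 2) from rfl]
  rw [show (∫ s in Set.Ioi (1:ℝ), Real.exp (-(u * s) ^ 2 / 2)) = u⁻¹ * ∫ v in Set.Ioi u, Real.exp (-v ^ 2 / 2) from h]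
  field_simp

lemma kk_integrable_s {u r : ℝ} (hu : 0 < u) :
    IntegrableOn (fun s : ℝ => kk u s r) (Set.Ioi 1) := by
  have hb : 0 < u ^ 2 / 2 := by positivity
  have h := ((integrable_exp_neg_mul_sq hb).integrableOn (s := Set.Ioi 1)).const_mul
    (u ^ 2 * Real.exp (-((r ^ 2 - 1) * u ^ 2) / 2))
  apply h.congr
  filter_upwards with s
  unfold kk
  rw [mul_assoc, ← Real.exp_add]
  congr 2
  ring

lemma kk_int_s {u r : ℝ} (hu : 0 < u) :
    ∫ s in Set.Ioi (1:ℝ), kk u s r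
      = u ^ 2 * Real.exp (-((r ^ 2 - 1) * u ^ 2) / 2) * GG u := by
  unfold kk GG
  rw [show (fun s => u ^ 2 * Real.exp (-((s ^ 2 + r ^ 2 - 1) * u ^ 2) / 2))
      = (fun s : ℝ => (u ^ 2 * Real.exp (-((r ^ 2 - 1) * u ^ 2) / 2)) * Real.exp (-(u * s) ^ 2 / 2))
      from funext fun s => by rw [mul_assoc, ← Real.exp_add]; congr 2; ring]
  rw [integral_const_mul]

lemma f2_eq {u : ℝ} (hu : 0 < u) :
    Real.exp (u ^ 2 / 2) * normalCDF (-u) ^ 2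
      = ((Real.sqrt (2 * Real.pi))⁻¹) ^ 2
        * ∫ r in Set.Ioi (1:ℝ), ∫ s in Set.Ioi (1:ℝ), kk u s r := by
  have hout : ∀ r : ℝ, (∫ s in Set.Ioi (1:ℝ), kk u s r)
      = u ^ 2 * Real.exp (-((r ^ 2 - 1) * u ^ 2) / 2) * GG u := fun r => kk_int_s hu
  rw [integral_congr_ae (Eventually.of_forall hout)]
  have hsplit : ∀ r : ℝ, u ^ 2 * Real.exp (-((r ^ 2 - 1) * u ^ 2) / 2) * GG u
      = (u ^ 2 * Real.exp (u ^ 2 / 2) * GG u) * Real.exp (-(u * r) ^ 2 / 2) := by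
    intro r
    have hx : Real.exp (-((r ^ 2 - 1) * u ^ 2) / 2)
        = Real.exp (u ^ 2 / 2) * Real.exp (-(u * r) ^ 2 / 2) := by
      rw [← Real.exp_add]; congr 1; ring
    rw [hx]; ring
  rw [integral_congr_ae (Eventually.of_forall hsplit), integral_const_mul]
  rw [normalCDF_neg, scale hu]
  unfold GG
  ring

lemma kk_int_s' {u : ℝ} (hu : 0 < u) (r : ℝ) :
    ∫ s in Set.Ioi (1:ℝ), kk u s r
      = (u ^ 2 * Real.exp (u ^ 2 / 2) * GG u) * Real.exp (-(u ^ 2 / 2) * r ^ 2) := by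
  rw [kk_int_s hu]
  have hx : Real.exp (-((r ^ 2 - 1) * u ^ 2) / 2)
      = Real.exp (u ^ 2 / 2) * Real.exp (-(u ^ 2 / 2) * r ^ 2) := by
    rw [← Real.exp_add]; congr 1; ring
  rw [hx]; ring

lemma N_continuous : Continuous (fun u : ℝ => normalCDF (-u)) :=
  continuous_iff_continuousAt.2 fun u => (hasDerivAt_N u).continuousAt

lemma kk_meas3 : Measurable (fun q : (ℝ × ℝ) × ℝ => ENNReal.ofReal (kk q.1.1 q.2 q.1.2)) := by
  apply Measurable.ennreal_ofReal
  exact (kk_continuous.comp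
    (by fun_prop : Continuous fun q : (ℝ × ℝ) × ℝ => (q.1.1, q.2, q.1.2))).measurable

lemma kk_meas3' (r : ℝ) : Measurable (fun q : ℝ × ℝ => ENNReal.ofReal (kk q.1 q.2 r)) := by
  apply Measurable.ennreal_ofReal
  exact (kk_continuous.comp
    (by fun_prop : Continuous fun q : ℝ × ℝ => (q.1, q.2, r))).measurable

lemma part2 :
    IntegrableOn (fun u : ℝ => Real.exp (u ^ 2 / 2) * normalCDF (-u) ^ 2) (Set.Ioi 0) ∧
    ∫ u in Set.Ioi (0:ℝ), Real.exp (u ^ 2 / 2) * normalCDF (-u) ^ 2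
      = (Real.sqrt (2 * Real.pi))⁻¹ * Real.log 2 / 2 := by
  set S : ℝ := Real.sqrt (2 * Real.pi) with hSdef
  have hS : 0 < S := Real.sqrt_pos.2 (by positivity)
  set c : ℝ := S⁻¹ with hcdef
  have hc : 0 ≤ c := by positivity
  set f₂ : ℝ → ℝ := fun u => Real.exp (u ^ 2 / 2) * normalCDF (-u) ^ 2 with hf2def
  have hf2nonneg : ∀ u, 0 ≤ f₂ u := fun u => by positivity
  have hf2cont : Continuous f₂ := by
    apply Continuous.mul
    · exact Real.continuous_exp.comp (by continuity)
    · exact (N_continuous).pow 2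
  -- Step A: pointwise identity as iterated lintegral
  have hA : ∀ u ∈ Set.Ioi (0:ℝ), ENNReal.ofReal (f₂ u)
      = ∫⁻ r in Set.Ioi (1:ℝ), ∫⁻ s in Set.Ioi (1:ℝ), ENNReal.ofReal (c ^ 2 * kk u s r) := by
    intro u hu
    rw [Set.mem_Ioi] at hu
    have hAr_int : IntegrableOn (fun r : ℝ => c ^ 2 * ∫ s in Set.Ioi (1:ℝ), kk u s r)
        (Set.Ioi 1) := by
      have hb : 0 < u ^ 2 / 2 := by positivity
      have h := ((integrable_exp_neg_mul_sq hb).integrableOn (s := Set.Ioi 1)).const_mul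
        (c ^ 2 * (u ^ 2 * Real.exp (u ^ 2 / 2) * GG u))
      apply h.congr
      filter_upwards with r
      rw [kk_int_s' hu r]
      ring
    have hAr_nonneg : (0:ℝ → ℝ) ≤ᵐ[volume.restrict (Set.Ioi 1)]
        fun r => c ^ 2 * ∫ s in Set.Ioi (1:ℝ), kk u s r := by
      filter_upwards with r
      exact mul_nonneg (by positivity)
        (setIntegral_nonneg measurableSet_Ioi fun s _ => kk_nonneg u s r)
    have h1 : f₂ u = ∫ r in Set.Ioi (1:ℝ), c ^ 2 * ∫ s in Set.Ioi (1:ℝ), kk u s r := by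
      rw [show f₂ u = Real.exp (u ^ 2 / 2) * normalCDF (-u) ^ 2 from rfl, f2_eq hu,
        integral_const_mul]
    rw [h1, ofReal_integral_eq_lintegral_ofReal hAr_int hAr_nonneg]
    apply setLIntegral_congr_fun_ae measurableSet_Ioi
    apply ae_of_all
    intro r _
    have h2 : c ^ 2 * ∫ s in Set.Ioi (1:ℝ), kk u s r
        = ∫ s in Set.Ioi (1:ℝ), c ^ 2 * kk u s r := (integral_const_mul _ _).symm
    rw [h2, ofReal_integral_eq_lintegral_ofReal ((kk_integrable_s hu).const_mul _)
      (ae_of_all _ fun s => mul_nonneg (by positivity) (kk_nonneg u s r))]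
  -- the triple lintegral, with constant pulled out
  have hpull : ∀ u ∈ Set.Ioi (0:ℝ),
      (∫⁻ r in Set.Ioi (1:ℝ), ∫⁻ s in Set.Ioi (1:ℝ), ENNReal.ofReal (c ^ 2 * kk u s r))
      = ENNReal.ofReal (c ^ 2) *
        ∫⁻ r in Set.Ioi (1:ℝ), ∫⁻ s in Set.Ioi (1:ℝ), ENNReal.ofReal (kk u s r) := by
    intro u _
    rw [← lintegral_const_mul' _ _ ENNReal.ofReal_ne_top]
    apply lintegral_congr
    intro r
    rw [← lintegral_const_mul' _ _ ENNReal.ofReal_ne_top]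
    apply lintegral_congr
    intro s
    rw [ENNReal.ofReal_mul (by positivity)]
  -- Tonelli swaps
  have hswap : (∫⁻ u in Set.Ioi (0:ℝ), ∫⁻ r in Set.Ioi (1:ℝ), ∫⁻ s in Set.Ioi (1:ℝ),
        ENNReal.ofReal (kk u s r))
      = ∫⁻ r in Set.Ioi (1:ℝ), ∫⁻ s in Set.Ioi (1:ℝ), ∫⁻ u in Set.Ioi (0:ℝ),
        ENNReal.ofReal (kk u s r) := by
    rw [lintegral_lintegral_swap]
    · apply lintegral_congr
      intro r
      rw [lintegral_lintegral_swap]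
      exact (kk_meas3' r).aemeasurable
    · exact (Measurable.lintegral_prod_right
        (f := fun (p : ℝ × ℝ) s => ENNReal.ofReal (kk p.1 s p.2)) kk_meas3).aemeasurable
  -- innermost u-integral
  have hu_int : ∀ r ∈ Set.Ioi (1:ℝ), ∀ s ∈ Set.Ioi (1:ℝ),
      (∫⁻ u in Set.Ioi (0:ℝ), ENNReal.ofReal (kk u s r))
      = ENNReal.ofReal ((S / 2) * (1 / ((s ^ 2 + r ^ 2 - 1) * Real.sqrt (s ^ 2 + r ^ 2 - 1)))) := by
    intro r hr s hs
    rw [Set.mem_Ioi] at hr hs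
    have hq : 0 < s ^ 2 + r ^ 2 - 1 := by nlinarith
    unfold kk
    rw [← ofReal_integral_eq_lintegral_ofReal (sq_qexp_integrableOn hq)
      (ae_of_all _ fun u => by positivity), moment2 hq]
    rw [← hSdef]
    congr 1
    rw [div_mul_div_comm, mul_one, ← mul_assoc]
  -- s-integral
  have hs_int : ∀ r ∈ Set.Ioi (1:ℝ),
      (∫⁻ s in Set.Ioi (1:ℝ),
        ENNReal.ofReal ((S / 2) * (1 / ((s ^ 2 + r ^ 2 - 1) * Real.sqrt (s ^ 2 + r ^ 2 - 1)))))
      = ENNReal.ofReal (S / 2) * ENNReal.ofReal (1 / (r * (r + 1))) := by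
    intro r hr
    rw [Set.mem_Ioi] at hr
    have h1 : ∀ s : ℝ, ENNReal.ofReal ((S / 2) * (1 / ((s ^ 2 + r ^ 2 - 1) * Real.sqrt (s ^ 2 + r ^ 2 - 1))))
        = ENNReal.ofReal (S / 2) * ENNReal.ofReal (1 / ((s ^ 2 + r ^ 2 - 1) * Real.sqrt (s ^ 2 + r ^ 2 - 1))) :=
      fun s => ENNReal.ofReal_mul (by positivity)
    simp_rw [h1]
    rw [lintegral_const_mul' _ _ ENNReal.ofReal_ne_top]
    congr 1
    rw [← ofReal_integral_eq_lintegral_ofReal (int_s hr).1 ?_, (int_s hr).2]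
    apply (ae_restrict_iff' measurableSet_Ioi).2
    apply ae_of_all
    intro s hs
    rw [Set.mem_Ioi] at hs
    have hq : 0 < s ^ 2 + r ^ 2 - 1 := by nlinarith
    positivity
  -- r-integral
  have hr_int : (∫⁻ r in Set.Ioi (1:ℝ),
        ENNReal.ofReal (S / 2) * ENNReal.ofReal (1 / (r * (r + 1))))
      = ENNReal.ofReal (S / 2) * ENNReal.ofReal (Real.log 2) := by
    rw [lintegral_const_mul' _ _ ENNReal.ofReal_ne_top]
    congr 1
    rw [← ofReal_integral_eq_lintegral_ofReal int_r.1 ?_, int_r.2]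
    apply (ae_restrict_iff' measurableSet_Ioi).2
    apply ae_of_all
    intro r hr
    rw [Set.mem_Ioi] at hr
    have h0 : 0 < r := lt_trans one_pos hr
    positivity
  -- assemble the value of the lintegral
  have key : (∫⁻ u in Set.Ioi (0:ℝ), ENNReal.ofReal (f₂ u))
      = ENNReal.ofReal (c * Real.log 2 / 2) := by
    rw [setLIntegral_congr_fun_ae measurableSet_Ioi (ae_of_all _ hA),
        setLIntegral_congr_fun_ae measurableSet_Ioi (ae_of_all _ hpull),
        lintegral_const_mul' _ _ ENNReal.ofReal_ne_top, hswap]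
    rw [setLIntegral_congr_fun_ae measurableSet_Ioi (ae_of_all _ (fun r hr => by
      rw [setLIntegral_congr_fun_ae measurableSet_Ioi (ae_of_all _ (fun s hs => hu_int r hr s hs)),
        hs_int r hr]))]
    rw [hr_int]
    rw [← ENNReal.ofReal_mul (by positivity), ← ENNReal.ofReal_mul (by positivity)]
    congr 1
    have hcS : c * S = 1 := inv_mul_cancel₀ hS.ne'
    calc c ^ 2 * (S / 2 * Real.log 2) = (c * S) * (c * Real.log 2 / 2) := by ring
      _ = c * Real.log 2 / 2 := by rw [hcS]; ring
  -- conclude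
  have hmeas : AEStronglyMeasurable f₂ (volume.restrict (Set.Ioi 0)) :=
    hf2cont.aestronglyMeasurable
  have hint : IntegrableOn f₂ (Set.Ioi 0) := by
    refine ⟨hmeas, ?_⟩
    rw [hasFiniteIntegral_iff_ofReal (ae_of_all _ hf2nonneg), key]
    exact ENNReal.ofReal_lt_top
  refine ⟨hint, ?_⟩
  rw [integral_eq_lintegral_of_nonneg_ae (ae_of_all _ hf2nonneg) hmeas, key,
    ENNReal.toReal_ofReal (by positivity)]



theorem integral_Iplus :
    ∫ u in Set.Ioi (0 : ℝ), normalCDF (-u) * (1 - Real.exp (u ^ 2 / 2) * normalCDF (-u))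
      = (1 - (1 / 2) * Real.log 2) / Real.sqrt (2 * Real.pi) := by
  rw [show (fun u : ℝ => normalCDF (-u) * (1 - Real.exp (u ^ 2 / 2) * normalCDF (-u)))
      = fun u : ℝ => normalCDF (-u) - Real.exp (u ^ 2 / 2) * normalCDF (-u) ^ 2
      from funext fun u => by ring]
  rw [integral_sub part1a.1 part2.1, part1a.2, part2.2, div_eq_mul_inv]
  ring
end

section
/- There exist a constant C > 0 and an integer s₀ such that for all integers s ≥ s₀ and all integers i with 0 ≤ i ≤ s^{5/8}, the Poisson(s) probabilities satisfy |e^{i²/(2s)} · ϖ_{s−i}(s)/ϖ_s(s) − 1| ≤ C s^{−1/8}. (Equivalently, ϖ_{s−i}(s)/ϖ_s(s) = φ(i/√s)/φ(0) · (1 + O(s^{−1/8})) uniformly for 0 ≤ i ≤ s^{5/8}.) -/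
open Real

/-- Poisson(κ) probability mass function. -/
noncomputable def poissonPMF (κ : ℝ) (i : ℕ) : ℝ :=
  Real.exp (-κ) * κ ^ i / (Nat.factorial i)


private lemma gauss_sum_real (n : ℕ) :
    ∑ j ∈ Finset.range n, (j:ℝ) = ((n:ℝ)^2 - n)/2 := by
  induction n with
  | zero => simp
  | succ m ih => rw [Finset.sum_range_succ, ih]; push_cast; ring

private lemma log_one_sub_ge {x : ℝ} (_hx0 : 0 ≤ x) (hx2 : x ≤ 1/2) :
    -x - 2*x^2 ≤ Real.log (1-x) := by
  have h1x : (0:ℝ) < 1 - x := by linarith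
  have h2 : Real.log (1-x) = - Real.log (1-x)⁻¹ := by rw [Real.log_inv]; ring
  have h3 : Real.log (1-x)⁻¹ ≤ (1-x)⁻¹ - 1 := Real.log_le_sub_one_of_pos (by positivity)
  have h4 : (1-x)⁻¹ - 1 = x / (1-x) := by field_simp; ring
  have h5 : x/(1-x) ≤ x + 2*x^2 := by
    rw [div_le_iff₀ h1x]; nlinarith
  rw [h2]; rw [h4] at h3; linarith

set_option maxHeartbeats 1000000 in
theorem poisson_local_clt :
    ∃ C > (0 : ℝ), ∃ s₀ : ℕ, ∀ s : ℕ, s₀ ≤ s → ∀ i : ℕ,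
      (i : ℝ) ≤ (s : ℝ) ^ ((5 : ℝ) / 8) →
      |Real.exp ((i : ℝ) ^ 2 / (2 * s)) * poissonPMF s (s - i) / poissonPMF s s - 1|
        ≤ C * (s : ℝ) ^ (-(1 : ℝ) / 8) := by
  refine ⟨4, by norm_num, 256, ?_⟩
  intro s hs i hi
  have hs256 : (256 : ℝ) ≤ s := by exact_mod_cast hs
  have hs0 : (0 : ℝ) < s := by linarith
  have hs1 : (1 : ℝ) ≤ s := by linarith
  -- rpow arithmetic facts
  have h2to8 : (2:ℝ) ^ (8:ℝ) = 256 := by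
    rw [show (8:ℝ) = ((8:ℕ):ℝ) by norm_num, Real.rpow_natCast]; norm_num
  have hpow38 : (8:ℝ) ≤ (s:ℝ) ^ ((3:ℝ)/8) := by
    calc (8:ℝ) = (2:ℝ) ^ (3:ℝ) := by
          rw [show (3:ℝ) = ((3:ℕ):ℝ) by norm_num, Real.rpow_natCast]; norm_num
      _ = ((2:ℝ) ^ (8:ℝ)) ^ ((3:ℝ)/8) := by
          rw [← Real.rpow_mul (by norm_num)]; norm_num
      _ = (256:ℝ) ^ ((3:ℝ)/8) := by rw [h2to8]
      _ ≤ (s:ℝ) ^ ((3:ℝ)/8) := Real.rpow_le_rpow (by norm_num) hs256 (by norm_num)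
  have hneg38pos : (0:ℝ) < (s:ℝ) ^ (-(3:ℝ)/8) := Real.rpow_pos_of_pos hs0 _
  have hneg18pos : (0:ℝ) < (s:ℝ) ^ (-(1:ℝ)/8) := Real.rpow_pos_of_pos hs0 _
  have hneg38 : (s:ℝ) ^ (-(3:ℝ)/8) ≤ 1/8 := by
    rw [show (-(3:ℝ)/8) = -((3:ℝ)/8) by ring, Real.rpow_neg hs0.le]
    rw [inv_le_comm₀ (Real.rpow_pos_of_pos hs0 _) (by norm_num)]
    linarith
  have h38le18 : (s:ℝ) ^ (-(3:ℝ)/8) ≤ (s:ℝ) ^ (-(1:ℝ)/8) :=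
    Real.rpow_le_rpow_of_exponent_le hs1 (by norm_num)
  have hneg18 : (s:ℝ) ^ (-(1:ℝ)/8) ≤ 1/2 := by
    rw [show (-(1:ℝ)/8) = -((1:ℝ)/8) by ring, Real.rpow_neg hs0.le]
    rw [inv_le_comm₀ (Real.rpow_pos_of_pos hs0 _) (by norm_num)]
    have h2le : (2:ℝ) ≤ (s:ℝ) ^ ((1:ℝ)/8) := by
      calc (2:ℝ) = ((2:ℝ) ^ (8:ℝ)) ^ ((1:ℝ)/8) := by
              rw [← Real.rpow_mul (by norm_num)]; norm_num
        _ = (256:ℝ) ^ ((1:ℝ)/8) := by rw [h2to8]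
        _ ≤ (s:ℝ) ^ ((1:ℝ)/8) := Real.rpow_le_rpow (by norm_num) hs256 (by norm_num)
    linarith
  have hsplit : (s:ℝ) ^ ((5:ℝ)/8) = s * (s:ℝ) ^ (-(3:ℝ)/8) := by
    nth_rewrite 2 [← Real.rpow_one (s:ℝ)]
    rw [← Real.rpow_add hs0]; norm_num
  have hi' : (i:ℝ) ≤ s * (s:ℝ) ^ (-(3:ℝ)/8) := by rw [← hsplit]; exact hi
  -- i ≤ s/8
  have hi8 : (i:ℝ) ≤ (s:ℝ) / 8 := by
    calc (i:ℝ) ≤ s * (s:ℝ) ^ (-(3:ℝ)/8) := hi'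
      _ ≤ s * (1/8) := by nlinarith
      _ = s/8 := by ring
  have his : (i:ℝ) ≤ s := by linarith
  have hisn : i ≤ s := by exact_mod_cast his
  -- cube bound : i^3 ≤ s^2 * s^(-1/8)
  have hcube : (i:ℝ)^3 ≤ (s:ℝ)^2 * (s:ℝ) ^ (-(1:ℝ)/8) := by
    have h1 : (i:ℝ)^3 ≤ ((s:ℝ) ^ ((5:ℝ)/8))^3 :=
      pow_le_pow_left₀ (Nat.cast_nonneg i) hi 3
    have h2 : ((s:ℝ) ^ ((5:ℝ)/8))^3 = (s:ℝ)^2 * (s:ℝ) ^ (-(1:ℝ)/8) := by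
      rw [← Real.rpow_natCast ((s:ℝ) ^ ((5:ℝ)/8)) 3, ← Real.rpow_mul hs0.le,
        show ((s:ℝ)^2 : ℝ) = (s:ℝ) ^ ((2:ℕ):ℝ) by rw [Real.rpow_natCast],
        ← Real.rpow_add hs0]
      norm_num
    linarith
  -- i/(2s) ≤ s^(-1/8)
  have hi2s : (i:ℝ) / (2*s) ≤ (s:ℝ) ^ (-(1:ℝ)/8) := by
    rw [div_le_iff₀ (by positivity)]
    calc (i:ℝ) ≤ s * (s:ℝ) ^ (-(3:ℝ)/8) := hi'
      _ ≤ s * (s:ℝ) ^ (-(1:ℝ)/8) := by nlinarith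
      _ ≤ (s:ℝ) ^ (-(1:ℝ)/8) * (2*s) := by ring_nf; nlinarith
  -- ratio of pmfs equals product
  have hfacpos : ∀ n : ℕ, (0:ℝ) < (Nat.factorial n : ℝ) := fun n => by
    exact_mod_cast Nat.factorial_pos n
  have hratio : poissonPMF s (s-i) / poissonPMF s s
      = ∏ j ∈ Finset.range i, (1 - (j:ℝ)/s) := by
    have hdesc : (∏ j ∈ Finset.range i, ((s:ℝ) - j)) = (Nat.descFactorial s i : ℝ) := by
      rw [Nat.descFactorial_eq_prod_range, Nat.cast_prod]
      apply Finset.prod_congr rfl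
      intro j hj
      rw [Nat.cast_sub (le_trans (Finset.mem_range.mp hj).le hisn)]
    have hfact : (Nat.factorial s : ℝ)
        = (Nat.factorial (s-i) : ℝ) * ∏ j ∈ Finset.range i, ((s:ℝ) - j) := by
      rw [hdesc, ← Nat.cast_mul, Nat.factorial_mul_descFactorial hisn]
    have hss : (s:ℝ)^s = (s:ℝ)^(s-i) * (s:ℝ)^i := by
      rw [← pow_add]; congr 1; omega
    have h2 : ∏ j ∈ Finset.range i, (1 - (j:ℝ)/s)
        = (∏ j ∈ Finset.range i, ((s:ℝ) - j)) / (s:ℝ)^i := by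
      rw [show ((s:ℝ)^i) = ∏ _j ∈ Finset.range i, (s:ℝ) by
        simp [Finset.prod_const], ← Finset.prod_div_distrib]
      apply Finset.prod_congr rfl
      intro j _
      field_simp
    rw [h2, poissonPMF, poissonPMF, hss]
    have e1 : Real.exp (-(s:ℝ)) ≠ 0 := Real.exp_ne_zero _
    have f1 := (hfacpos (s-i)).ne'
    have f2 := (hfacpos s).ne'
    have sp : (s:ℝ)^(s-i) ≠ 0 := pow_ne_zero _ hs0.ne'
    have sp2 : (s:ℝ)^i ≠ 0 := pow_ne_zero _ hs0.ne'
    rw [hfact]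
    field_simp
  have hpos : ∀ j ∈ Finset.range i, (0:ℝ) < 1 - (j:ℝ)/s := by
    intro j hj
    have hj' : (j:ℝ) < i := by exact_mod_cast Finset.mem_range.mp hj
    have hd : (j:ℝ)/s ≤ 1/8 := by rw [div_le_iff₀ hs0]; nlinarith
    linarith
  have hexp : Real.exp ((i:ℝ)^2/(2*(s:ℝ))) * poissonPMF s (s-i) / poissonPMF s s
      = Real.exp ((i:ℝ)^2/(2*(s:ℝ)) + ∑ j ∈ Finset.range i, Real.log (1 - (j:ℝ)/s)) := by
    rw [mul_div_assoc, hratio,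
      show (∏ j ∈ Finset.range i, (1 - (j:ℝ)/s))
          = Real.exp (∑ j ∈ Finset.range i, Real.log (1 - (j:ℝ)/s)) by
        rw [Real.exp_sum]
        exact Finset.prod_congr rfl (fun j hj => (Real.exp_log (hpos j hj)).symm),
      ← Real.exp_add]
  set L : ℝ := (i:ℝ)^2/(2*(s:ℝ)) + ∑ j ∈ Finset.range i, Real.log (1 - (j:ℝ)/s) with hLdef
  -- upper bound on the log-sum
  have hup : ∑ j ∈ Finset.range i, Real.log (1 - (j:ℝ)/s)
      ≤ -((((i:ℝ)^2 - i)/2)/s) := by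
    calc ∑ j ∈ Finset.range i, Real.log (1 - (j:ℝ)/s)
        ≤ ∑ j ∈ Finset.range i, (-((j:ℝ)/s)) := by
          apply Finset.sum_le_sum
          intro j hj
          have := Real.log_le_sub_one_of_pos (hpos j hj)
          linarith
      _ = -((∑ j ∈ Finset.range i, (j:ℝ))/s) := by
          rw [Finset.sum_neg_distrib, Finset.sum_div]
      _ = -((((i:ℝ)^2 - i)/2)/s) := by rw [gauss_sum_real]
  -- lower bound on the log-sum
  have hsq : ∑ j ∈ Finset.range i, ((j:ℝ)/s)^2 ≤ (i:ℝ)^3/(s:ℝ)^2 := by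
    calc ∑ j ∈ Finset.range i, ((j:ℝ)/s)^2
        ≤ ∑ _j ∈ Finset.range i, ((i:ℝ)/s)^2 := by
          apply Finset.sum_le_sum
          intro j hj
          have hj' : (j:ℝ) ≤ i := by
            exact_mod_cast (Finset.mem_range.mp hj).le
          have hjs : (j:ℝ)/s ≤ (i:ℝ)/s := by gcongr
          exact pow_le_pow_left₀ (by positivity) hjs 2
      _ = (i:ℝ) * ((i:ℝ)/s)^2 := by
          rw [Finset.sum_const, Finset.card_range, nsmul_eq_mul]
      _ = (i:ℝ)^3/(s:ℝ)^2 := by field_simp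
  have hlo : -((((i:ℝ)^2 - i)/2)/s) - 2*((i:ℝ)^3/(s:ℝ)^2)
      ≤ ∑ j ∈ Finset.range i, Real.log (1 - (j:ℝ)/s) := by
    have step : ∑ j ∈ Finset.range i, (-((j:ℝ)/s) - 2*((j:ℝ)/s)^2)
        ≤ ∑ j ∈ Finset.range i, Real.log (1 - (j:ℝ)/s) := by
      apply Finset.sum_le_sum
      intro j hj
      have hj' : (j:ℝ) < i := by exact_mod_cast Finset.mem_range.mp hj
      have hd : (j:ℝ)/s ≤ 1/8 := by rw [div_le_iff₀ hs0]; nlinarith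
      exact log_one_sub_ge (by positivity) (by linarith)
    have expand : ∑ j ∈ Finset.range i, (-((j:ℝ)/s) - 2*((j:ℝ)/s)^2)
        = -((∑ j ∈ Finset.range i, (j:ℝ))/s) - 2*(∑ j ∈ Finset.range i, ((j:ℝ)/s)^2) := by
      rw [Finset.sum_sub_distrib, Finset.sum_neg_distrib, Finset.sum_div,
        ← Finset.mul_sum]
    rw [expand, gauss_sum_real] at step
    linarith
  -- bound |L|
  have hLup : L ≤ (s:ℝ) ^ (-(1:ℝ)/8) := by
    have hid : (i:ℝ)^2/(2*(s:ℝ)) - ((((i:ℝ)^2 - i)/2)/s) = (i:ℝ)/(2*s) := by ring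
    have := hup
    calc L ≤ (i:ℝ)^2/(2*(s:ℝ)) - ((((i:ℝ)^2 - i)/2)/s) := by
          rw [hLdef]; linarith
      _ = (i:ℝ)/(2*s) := hid
      _ ≤ (s:ℝ) ^ (-(1:ℝ)/8) := hi2s
  have hcube' : (i:ℝ)^3/(s:ℝ)^2 ≤ (s:ℝ) ^ (-(1:ℝ)/8) := by
    rw [div_le_iff₀ (by positivity)]; nlinarith
  have hLlo : -(2 * (s:ℝ) ^ (-(1:ℝ)/8)) ≤ L := by
    have hid : (i:ℝ)^2/(2*(s:ℝ)) - ((((i:ℝ)^2 - i)/2)/s) = (i:ℝ)/(2*s) := by ring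
    have h1 : -((((i:ℝ)^2 - i)/2)/s) - 2*((i:ℝ)^3/(s:ℝ)^2) + (i:ℝ)^2/(2*(s:ℝ)) ≤ L := by
      rw [hLdef]; linarith
    have h2 : (0:ℝ) ≤ (i:ℝ)/(2*s) := by positivity
    nlinarith
  have habs : |L| ≤ 2 * (s:ℝ) ^ (-(1:ℝ)/8) := by
    rw [abs_le]; constructor <;> linarith
  have habs1 : |L| ≤ 1 := by linarith
  rw [hexp]
  calc |Real.exp L - 1| ≤ 2 * |L| := Real.abs_exp_sub_one_le habs1
    _ ≤ 2 * (2 * (s:ℝ) ^ (-(1:ℝ)/8)) := by linarith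
    _ = 4 * (s:ℝ) ^ (-(1:ℝ)/8) := by ring
end

section
/- For every real s > 0 and every integer i ≥ 0, Σ_{j=0}^i Π_j(s) = s ϖ_i(s) − (s − i − 1) Π_i(s). In particular, for every positive integer s, Σ_{j=0}^{s−1} Π_j(s) = s ϖ_{s−1}(s) = s ϖ_s(s). -/
open Real

/-- Poisson(κ) cumulative distribution function. -/
noncomputable def poissonCDF (κ : ℝ) (i : ℕ) : ℝ :=
  ∑ j ∈ Finset.range (i + 1), poissonPMF κ j

lemma pmf_rec (s : ℝ) (i : ℕ) :
    s * poissonPMF s i = (i + 1) * poissonPMF s (i + 1) := by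
  simp only [poissonPMF, Nat.factorial_succ, Nat.cast_mul, pow_succ]
  have h1 : (Nat.factorial i : ℝ) ≠ 0 := Nat.cast_ne_zero.mpr (Nat.factorial_ne_zero i)
  have h2 : ((i : ℝ) + 1) ≠ 0 := by positivity
  field_simp
  push_cast
  ring

lemma first_part (s : ℝ) (i : ℕ) :
    ∑ j ∈ Finset.range (i + 1), poissonCDF s j
      = s * poissonPMF s i - (s - i - 1) * poissonCDF s i := by
  induction i with
  | zero =>
    simp [poissonCDF]
    ring
  | succ n ih =>
    rw [Finset.sum_range_succ, ih]
    have hc : poissonCDF s (n + 1) = poissonCDF s n + poissonPMF s (n + 1) := by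
      simp [poissonCDF, Finset.sum_range_succ]
    have hr := pmf_rec s n
    rw [hc]
    push_cast
    nlinarith [hr]

theorem poisson_cdf_partial_sums :
    (∀ (s : ℝ), 0 < s → ∀ i : ℕ,
      ∑ j ∈ Finset.range (i + 1), poissonCDF s j
        = s * poissonPMF s i - (s - i - 1) * poissonCDF s i) ∧
    (∀ s : ℕ, 0 < s →
      (∑ j ∈ Finset.range s, poissonCDF s j = s * poissonPMF s (s - 1) ∧
        (s : ℝ) * poissonPMF s (s - 1) = s * poissonPMF s s)) := by
  constructor
  · intro s _ i; exact first_part s i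
  · intro s hs
    obtain ⟨n, rfl⟩ : ∃ n, s = n + 1 := ⟨s - 1, (Nat.succ_pred_eq_of_pos hs).symm⟩
    constructor
    · have h := first_part ((n : ℝ) + 1) n
      simp only [Nat.add_sub_cancel]
      push_cast
      push_cast at h
      rw [h]
      ring
    · have h := pmf_rec ((n : ℝ) + 1) n
      simp only [Nat.add_sub_cancel]
      push_cast
      push_cast at h
      rw [h]
end

section
/- For every real x, √(2π) e^{x²/2} Φ(−x) = ∫_0^∞ e^{−w²/2 − wx} dw; consequently, the function x ↦ e^{x²/2} Φ(−x) is strictly decreasing on ℝ. -/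
open Real

open MeasureTheory Set

lemma aux_integral_Ioi_comp_add_right (f : ℝ → ℝ) (a c : ℝ) :
    ∫ x in Ioi c, f (x + a) = ∫ x in Ioi (c + a), f x := by
  have A : MeasurableEmbedding fun x : ℝ => x + a :=
    (Homeomorph.addRight a).isClosedEmbedding.measurableEmbedding
  have := A.setIntegral_map (μ := volume) f (Ioi (c + a))
  rw [map_add_right_eq_self (volume : Measure ℝ) a] at this
  rw [this]
  congr 1
  ext x
  simp [lt_add_iff_pos_left, add_comm, lt_sub_iff_add_lt]

lemma aux_integrable (x : ℝ) :
    MeasureTheory.Integrable (fun w : ℝ => Real.exp (-w ^ 2 / 2 - w * x)) := by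
  have h : MeasureTheory.Integrable
      (fun w : ℝ => Real.exp (x ^ 2 / 2) * Real.exp (-(1/2) * (w + x) ^ 2)) :=
    (((integrable_exp_neg_mul_sq (by norm_num : (0:ℝ) < 1/2)).comp_add_right x).const_mul _)
  refine h.congr (Filter.Eventually.of_forall fun w => ?_)
  simp only [← Real.exp_add]
  congr 1
  ring

lemma aux_repr (x : ℝ) : Real.sqrt (2 * Real.pi) * Real.exp (x ^ 2 / 2) * normalCDF (-x)
    = ∫ w in Set.Ioi (0 : ℝ), Real.exp (-w ^ 2 / 2 - w * x) := by
  have hs : Real.sqrt (2 * Real.pi) ≠ 0 := by positivity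
  have h1 : (∫ v in Iic (-x), Real.exp (-v ^ 2 / 2))
      = ∫ v in Ioi x, Real.exp (-v ^ 2 / 2) := by
    rw [show Ioi x = Ioi (-(-x)) from by ring_nf, ← integral_comp_neg_Iic]
    congr 1; ext v; ring_nf
  have h2 : (∫ v in Ioi x, Real.exp (-v ^ 2 / 2))
      = ∫ w in Ioi (0:ℝ), Real.exp (-(w + x) ^ 2 / 2) := by
    rw [aux_integral_Ioi_comp_add_right (fun v => Real.exp (-v ^ 2 / 2)) x 0, zero_add]
  rw [normalCDF]
  rw [show Real.sqrt (2 * Real.pi) * Real.exp (x ^ 2 / 2) *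
      ((Real.sqrt (2 * Real.pi))⁻¹ * ∫ v in Iic (-x), Real.exp (-v ^ 2 / 2))
      = Real.exp (x ^ 2 / 2) * ∫ v in Iic (-x), Real.exp (-v ^ 2 / 2) by
    field_simp]
  rw [h1, h2, ← integral_const_mul]
  congr 1; ext w
  rw [← Real.exp_add]
  ring_nf

theorem mills_ratio_representation_and_monotone :
    (∀ x : ℝ, Real.sqrt (2 * Real.pi) * Real.exp (x ^ 2 / 2) * normalCDF (-x)
        = ∫ w in Set.Ioi (0 : ℝ), Real.exp (-w ^ 2 / 2 - w * x)) ∧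
    StrictAnti (fun x : ℝ => Real.exp (x ^ 2 / 2) * normalCDF (-x)) := by
  refine ⟨aux_repr, ?_⟩
  intro x y hxy
  have hs : (0:ℝ) < Real.sqrt (2 * Real.pi) := by positivity
  have hx := aux_repr x
  have hy := aux_repr y
  have key : (∫ w in Ioi (0:ℝ), Real.exp (-w ^ 2 / 2 - w * y))
      < ∫ w in Ioi (0:ℝ), Real.exp (-w ^ 2 / 2 - w * x) := by
    have hix := (aux_integrable x).integrableOn (s := Ioi (0:ℝ))
    have hiy := (aux_integrable y).integrableOn (s := Ioi (0:ℝ))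
    have hpos : 0 < ∫ w in Ioi (0:ℝ),
        (Real.exp (-w ^ 2 / 2 - w * x) - Real.exp (-w ^ 2 / 2 - w * y)) := by
      rw [setIntegral_pos_iff_support_of_nonneg_ae]
      · have hsub : Ioi (0:ℝ) ⊆ Function.support fun w =>
            Real.exp (-w ^ 2 / 2 - w * x) - Real.exp (-w ^ 2 / 2 - w * y) := by
          intro w hw
          have : Real.exp (-w ^ 2 / 2 - w * y) < Real.exp (-w ^ 2 / 2 - w * x) := by
            apply Real.exp_lt_exp.2
            have := hw
            simp only [mem_Ioi] at this
            nlinarith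
          simp only [Function.mem_support]
          exact sub_ne_zero.2 (ne_of_gt this)
        rw [Set.inter_eq_right.2 hsub]
        simp [Real.volume_Ioi]
      · rw [Filter.EventuallyLE, ae_restrict_iff' measurableSet_Ioi]
        refine Filter.Eventually.of_forall fun w hw => ?_
        have hw' : 0 < w := hw
        have : Real.exp (-w ^ 2 / 2 - w * y) ≤ Real.exp (-w ^ 2 / 2 - w * x) := by
          apply Real.exp_le_exp.2; nlinarith
        simpa using sub_nonneg.2 this
      · exact hix.sub hiy
    have := integral_sub hix hiy
    rw [this] at hpos
    linarith
  rw [mul_comm (Real.sqrt (2 * Real.pi)), mul_assoc] at hx hy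
  simp only
  nlinarith [Real.exp_pos (x ^ 2 / 2), Real.exp_pos (y ^ 2 / 2)]
end
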